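/- arXiv:2206.06042 — 4 statements merged into one kernel-verified Lean document; each statement's English description precedes it below -/
import Mathlib

section
/- Let (K, σ) be a σ-field and let a_1, …, a_n ∈ K be pairwise non-σ-conjugate. Then there is a unique monic skew polynomial P(T) ∈ K[T;σ] of degree n whose right roots in K are exactly a_1, …, a_n. Moreover, if Q(T) ∈ K[T;σ] satisfies Q(a_1) = ⋯ = Q(a_n) = 0, then Q(T) ∈ K[T;σ]·P(T). -/
open Polynomial

variable {K : Type*} [Field K]

/-- `skewN σ i a = σ^{i-1}(a)⋯σ(a)·a`, with `skewN σ 0 a = 1`. -/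
def skewN (σ : K →+* K) : ℕ → K → K
  | 0, _ => 1
  | i + 1, a => σ (skewN σ i a) * a

/-- Right evaluation of a skew polynomial `P = Σ aᵢ Tⁱ` at `a`: `P(a) = Σ aᵢ Nᵢ(a)`. -/
noncomputable def skewEval (σ : K →+* K) (P : Polynomial K) (a : K) : K :=
  ∑ i ∈ P.support, P.coeff i * skewN σ i a

/-- Multiplication in the skew polynomial ring `K[T;σ]` (with `T·a = σ(a)·T`),
using `Polynomial K` as the carrier of coefficient sequences. -/
noncomputable def skewMul (σ : K →+* K) (P Q : Polynomial K) : Polynomial K :=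
  ∑ i ∈ P.support, ∑ j ∈ Q.support,
    Polynomial.C (P.coeff i * (⇑σ)^[i] (Q.coeff j)) * Polynomial.X ^ (i + j)

/-- `a` and `b` are σ-conjugate: `a = σ(x)·b·x⁻¹` for some nonzero `x`. -/
def SkewConjugate (σ : K →+* K) (a b : K) : Prop :=
  ∃ x : K, x ≠ 0 ∧ a = σ x * b * x⁻¹

namespace BW

variable (σ : K →+* K)

lemma sig_ne_zero {x : K} (hx : x ≠ 0) : σ x ≠ 0 := by
  simpa [_root_.map_ne_zero] using hx

lemma iter_ne_zero (i : ℕ) {x : K} (hx : x ≠ 0) : (⇑σ)^[i] x ≠ 0 := by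
  induction i with
  | zero => simpa
  | succ i ih => rw [Function.iterate_succ_apply']; exact sig_ne_zero σ ih

lemma iter_map_inv (i : ℕ) (x : K) : (⇑σ)^[i] x⁻¹ = ((⇑σ)^[i] x)⁻¹ := by
  induction i with
  | zero => simp
  | succ i ih => rw [Function.iterate_succ_apply', Function.iterate_succ_apply', ih, map_inv₀]

lemma skewN_zero (b : K) : skewN σ 0 b = 1 := rfl

lemma skewN_succ (i : ℕ) (b : K) : skewN σ (i+1) b = σ (skewN σ i b) * b := rfl

lemma skewN_succ' (i : ℕ) (b : K) : skewN σ (i+1) b = (⇑σ)^[i] b * skewN σ i b := by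
  induction i with
  | zero => simp [skewN]
  | succ i ih =>
    have h : skewN σ (i+1+1) b = σ ((⇑σ)^[i] b) * (σ (skewN σ i b) * b) := by
      rw [skewN_succ σ (i+1) b, ih, map_mul]; ring
    rw [h, Function.iterate_succ_apply', skewN_succ σ i b]

lemma skewN_add (i j : ℕ) (b : K) :
    skewN σ (i + j) b = (⇑σ)^[i] (skewN σ j b) * skewN σ i b := by
  induction i with
  | zero => simp [skewN]
  | succ i ih =>
    have h1 : i + 1 + j = (i + j) + 1 := by ring
    rw [h1, skewN_succ', ih, skewN_succ']
    have h2 : (⇑σ)^[i+j] b * (⇑σ)^[i] (skewN σ j b) =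
        (⇑σ)^[i+1] (skewN σ j b) * (⇑σ)^[i] b := by
      have : (⇑σ)^[i] ((⇑σ)^[j] b * skewN σ j b) = (⇑σ)^[i] (σ (skewN σ j b) * b) := by
        rw [← skewN_succ', skewN_succ]
      rw [iterate_map_mul, iterate_map_mul] at this
      rw [← Function.iterate_add_apply] at this
      rw [show i + j = i + j from rfl]
      have h3 : (⇑σ)^[i+1] (skewN σ j b) = (⇑σ)^[i] (σ (skewN σ j b)) := by
        rw [Function.iterate_succ_apply]
      rw [h3, ← this]
    calc (⇑σ)^[i+j] b * ((⇑σ)^[i] (skewN σ j b) * skewN σ i b)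
        = ((⇑σ)^[i+j] b * (⇑σ)^[i] (skewN σ j b)) * skewN σ i b := by ring
      _ = ((⇑σ)^[i+1] (skewN σ j b) * (⇑σ)^[i] b) * skewN σ i b := by rw [h2]
      _ = (⇑σ)^[i+1] (skewN σ j b) * ((⇑σ)^[i] b * skewN σ i b) := by ring

lemma skewN_conj (i : ℕ) {x : K} (hx : x ≠ 0) (d : K) :
    skewN σ i (σ x * d * x⁻¹) = (⇑σ)^[i] x * skewN σ i d * x⁻¹ := by
  induction i with
  | zero => simp [skewN, mul_inv_cancel₀ hx]
  | succ i ih =>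
    have hσx : σ x ≠ 0 := sig_ne_zero σ hx
    rw [skewN_succ, ih, skewN_succ, Function.iterate_succ_apply']
    rw [map_mul, map_mul, map_inv₀]
    field_simp

end BW

namespace BW2
open BW

variable (σ : K →+* K)

lemma skewEval_def (P : Polynomial K) (b : K) :
    skewEval σ P b = P.sum fun i c => c * skewN σ i b := by
  rw [skewEval, Polynomial.sum_def]

lemma skewEval_monomial (j : ℕ) (q : K) (b : K) :
    skewEval σ (monomial j q) b = q * skewN σ j b := by
  rw [skewEval_def]
  exact Polynomial.sum_monomial_index q _ (zero_mul _)

lemma skewEval_add (P Q : Polynomial K) (b : K) :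
    skewEval σ (P + Q) b = skewEval σ P b + skewEval σ Q b := by
  simp only [skewEval_def]
  exact Polynomial.sum_add_index P Q _ (fun i => zero_mul _) (fun i a b' => add_mul a b' _)

/-- `skewEval` at a fixed point, as an additive monoid hom. -/
noncomputable def skewEvalHom (b : K) : Polynomial K →+ K where
  toFun P := skewEval σ P b
  map_zero' := by simp [skewEval_def]
  map_add' P Q := skewEval_add σ P Q b

lemma skewEval_zero (b : K) : skewEval σ 0 b = 0 := map_zero (skewEvalHom σ b)

lemma skewEval_sub (P Q : Polynomial K) (b : K) :
    skewEval σ (P - Q) b = skewEval σ P b - skewEval σ Q b := map_sub (skewEvalHom σ b) P Q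

lemma skewEval_finset_sum {α : Type*} (s : Finset α) (f : α → Polynomial K) (b : K) :
    skewEval σ (∑ i ∈ s, f i) b = ∑ i ∈ s, skewEval σ (f i) b := map_sum (skewEvalHom σ b) f s

lemma skewEval_C (c b : K) : skewEval σ (C c) b = c := by
  rw [← monomial_zero_left, skewEval_monomial]; simp [skewN]

lemma skewEval_one (b : K) : skewEval σ 1 b = 1 := by
  simpa using skewEval_C σ 1 b

lemma skewEval_X_sub_C (c b : K) : skewEval σ (X - C c) b = b - c := by
  rw [skewEval_sub, skewEval_C, ← monomial_one_one_eq_X, skewEval_monomial]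
  simp [skewN]

lemma skewMul_def (P Q : Polynomial K) :
    skewMul σ P Q = P.sum fun i p => Q.sum fun j q => monomial (i+j) (p * (⇑σ)^[i] q) := by
  rw [skewMul, Polynomial.sum_def]
  refine Finset.sum_congr rfl fun i _ => ?_
  rw [Polynomial.sum_def]
  exact Finset.sum_congr rfl fun j _ => C_mul_X_pow_eq_monomial

lemma skewMul_monomial_monomial (i j : ℕ) (p q : K) :
    skewMul σ (monomial i p) (monomial j q) = monomial (i+j) (p * (⇑σ)^[i] q) := by
  rw [skewMul_def]
  rw [Polynomial.sum_monomial_index]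
  · exact Polynomial.sum_monomial_index q _ (by simp)
  · rw [Polynomial.sum_def]
    exact Finset.sum_eq_zero fun j' _ => by simp

lemma skewMul_add_left (P P' Q : Polynomial K) :
    skewMul σ (P + P') Q = skewMul σ P Q + skewMul σ P' Q := by
  simp only [skewMul_def]
  refine Polynomial.sum_add_index P P' _ (fun i => ?_) (fun i a b => ?_)
  · rw [Polynomial.sum_def]; exact Finset.sum_eq_zero fun j _ => by simp
  · rw [Polynomial.sum_def, Polynomial.sum_def, Polynomial.sum_def, ← Finset.sum_add_distrib]
    exact Finset.sum_congr rfl fun j _ => by rw [← map_add (monomial (i + j)), add_mul]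

lemma skewMul_add_right (P Q Q' : Polynomial K) :
    skewMul σ P (Q + Q') = skewMul σ P Q + skewMul σ P Q' := by
  simp only [skewMul_def]
  rw [Polynomial.sum_def, Polynomial.sum_def, Polynomial.sum_def, ← Finset.sum_add_distrib]
  refine Finset.sum_congr rfl fun i _ => ?_
  refine Polynomial.sum_add_index Q Q' _ (fun j => by simp) (fun j a b => ?_)
  rw [← map_add (monomial (i + j)), ← mul_add, ← iterate_map_add]

lemma skewMul_zero_left (Q : Polynomial K) : skewMul σ 0 Q = 0 := by
  simp [skewMul_def]

lemma skewMul_zero_right (P : Polynomial K) : skewMul σ P 0 = 0 := by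
  rw [skewMul_def, Polynomial.sum_def]
  exact Finset.sum_eq_zero fun i _ => by simp

/-- `skewMul` on the left of a fixed `Q`, as an additive monoid hom. -/
noncomputable def skewMulLeftHom (Q : Polynomial K) : Polynomial K →+ Polynomial K where
  toFun P := skewMul σ P Q
  map_zero' := skewMul_zero_left σ Q
  map_add' P P' := skewMul_add_left σ P P' Q

noncomputable def skewMulRightHom (P : Polynomial K) : Polynomial K →+ Polynomial K where
  toFun Q := skewMul σ P Q
  map_zero' := skewMul_zero_right σ P
  map_add' Q Q' := skewMul_add_right σ P Q Q'

lemma skewMul_sub_left (P P' Q : Polynomial K) :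
    skewMul σ (P - P') Q = skewMul σ P Q - skewMul σ P' Q := map_sub (skewMulLeftHom σ Q) P P'

lemma skewMul_sub_right (P Q Q' : Polynomial K) :
    skewMul σ P (Q - Q') = skewMul σ P Q - skewMul σ P Q' := map_sub (skewMulRightHom σ P) Q Q'

end BW2

namespace BW3
open BW BW2

variable (σ : K →+* K)

/-- The twisted evaluation `Λ_P(b, c) = Σ pᵢ σ^i(c) Nᵢ(b)`. -/
noncomputable def skewLam (P : Polynomial K) (b c : K) : K :=
  ∑ i ∈ P.support, P.coeff i * (⇑σ)^[i] c * skewN σ i b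

lemma skewLam_zero (P : Polynomial K) (b : K) : skewLam σ P b 0 = 0 := by
  rw [skewLam]
  exact Finset.sum_eq_zero fun i _ => by simp

/-- Key formula: right evaluation of a skew product. -/
lemma skewEval_skewMul (P Q : Polynomial K) (b : K) :
    skewEval σ (skewMul σ P Q) b = skewLam σ P b (skewEval σ Q b) := by
  induction Q using Polynomial.induction_on' with
  | add Q Q' h1 h2 =>
    rw [skewMul_add_right, skewEval_add, skewEval_add, h1, h2, skewLam, skewLam, skewLam,
      ← Finset.sum_add_distrib]
    refine Finset.sum_congr rfl fun i _ => ?_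
    rw [iterate_map_add]; ring
  | monomial j q =>
    rcases eq_or_ne q 0 with rfl | hq
    · simp only [monomial_zero_right, skewMul_zero_right, skewEval_zero, skewLam_zero]
    · have hsup : (monomial j q).support = {j} := Polynomial.support_monomial j hq
      have hmul : skewMul σ P (monomial j q)
          = ∑ i ∈ P.support, monomial (i + j) (P.coeff i * (⇑σ)^[i] q) := by
        rw [skewMul_def, Polynomial.sum_def]
        refine Finset.sum_congr rfl fun i _ => ?_
        exact Polynomial.sum_monomial_index q _ (by simp)
      rw [hmul, skewEval_finset_sum, skewLam, skewEval_monomial]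
      refine Finset.sum_congr rfl fun i _ => ?_
      rw [skewEval_monomial, skewN_add, iterate_map_mul]
      ring

lemma skewLam_eq (P : Polynomial K) (b : K) {x : K} (hx : x ≠ 0) :
    skewLam σ P b x = skewEval σ P (σ x * b * x⁻¹) * x := by
  rw [skewLam, skewEval, Finset.sum_mul]
  refine Finset.sum_congr rfl fun i _ => ?_
  rw [skewN_conj σ i hx]
  field_simp

lemma skewEval_skewMul_of_root (P Q : Polynomial K) (b : K) (h : skewEval σ Q b = 0) :
    skewEval σ (skewMul σ P Q) b = 0 := by
  rw [skewEval_skewMul, h, skewLam_zero]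

lemma skewEval_skewMul_of_ne (P Q : Polynomial K) (b : K) (h : skewEval σ Q b ≠ 0) :
    skewEval σ (skewMul σ P Q) b
      = skewEval σ P (σ (skewEval σ Q b) * b * (skewEval σ Q b)⁻¹) * skewEval σ Q b := by
  rw [skewEval_skewMul, skewLam_eq σ P b h]

end BW3

namespace BW4
open BW BW2 BW3

variable (σ : K →+* K)

/-- `σ` iterated `i` times, as a ring hom. -/
def iterHom : ℕ → (K →+* K)
  | 0 => RingHom.id K
  | i + 1 => σ.comp (iterHom i)

lemma iterHom_apply (i : ℕ) (x : K) : iterHom σ i x = (⇑σ)^[i] x := by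
  induction i with
  | zero => rfl
  | succ i ih => rw [Function.iterate_succ_apply', iterHom, RingHom.comp_apply, ih]

/-- Left multiplication by a linear monic polynomial, in commutative terms. -/
lemma skewMul_X_sub_C_left (c : K) (P : Polynomial K) :
    skewMul σ (X - C c) P = (P.map σ) * X - C c * P := by
  rw [skewMul_sub_left]
  congr 1
  · induction P using Polynomial.induction_on' with
    | add P Q h1 h2 =>
      rw [skewMul_add_right, Polynomial.map_add, add_mul, h1, h2]
    | monomial j q =>
      rw [← monomial_one_one_eq_X, skewMul_monomial_monomial, map_monomial,
        monomial_mul_monomial]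
      simp [add_comm 1 j]
  · induction P using Polynomial.induction_on' with
    | add P Q h1 h2 =>
      rw [skewMul_add_right, mul_add, h1, h2]
    | monomial j q =>
      rw [← monomial_zero_left, skewMul_monomial_monomial, monomial_mul_monomial]
      simp

/-- Left multiplication by a monomial, in commutative terms. -/
lemma skewMul_monomial_left (k : ℕ) (q : K) (P : Polynomial K) :
    skewMul σ (monomial k q) P = C q * (P.map (iterHom σ k)) * X ^ k := by
  induction P using Polynomial.induction_on' with
  | add P Q h1 h2 =>
    rw [skewMul_add_right, h1, h2, Polynomial.map_add]; ring
  | monomial j p =>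
    rw [skewMul_monomial_monomial, map_monomial, iterHom_apply, C_mul_monomial,
      ← C_mul_X_pow_eq_monomial, ← C_mul_X_pow_eq_monomial]
    ring

lemma skewMul_monomial_left_natDegree (k : ℕ) {q : K} (hq : q ≠ 0) {P : Polynomial K}
    (hP : P.Monic) : (skewMul σ (monomial k q) P).natDegree = k + P.natDegree := by
  rw [skewMul_monomial_left]
  have h1 : (P.map (iterHom σ k)).Monic := hP.map _
  have hq' : (C q : Polynomial K) ≠ 0 := by simpa using hq
  have hM : (P.map (iterHom σ k)) ≠ 0 := h1.ne_zero
  rw [natDegree_mul (mul_ne_zero hq' hM) (pow_ne_zero k X_ne_zero), natDegree_mul hq' hM,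
    natDegree_C, natDegree_X_pow, hP.natDegree_map, zero_add, add_comm]

lemma skewMul_monomial_left_leadingCoeff (k : ℕ) (q : K) {P : Polynomial K}
    (hP : P.Monic) : (skewMul σ (monomial k q) P).leadingCoeff = q := by
  rcases eq_or_ne q 0 with rfl | hq
  · rw [monomial_zero_right, skewMul_zero_left, leadingCoeff_zero]
  rw [skewMul_monomial_left, leadingCoeff_mul, leadingCoeff_mul]
  have h1 : (P.map (iterHom σ k)).Monic := hP.map _
  simp [h1.leadingCoeff, leadingCoeff_X_pow]

lemma skewMul_monomial_left_ne_zero (k : ℕ) {q : K} (hq : q ≠ 0) {P : Polynomial K}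
    (hP : P.Monic) : skewMul σ (monomial k q) P ≠ 0 := by
  intro h
  have := skewMul_monomial_left_leadingCoeff σ k q hP
  rw [h] at this
  simp at this
  exact hq this.symm

end BW4

namespace BW5
open BW BW2 BW3 BW4

variable (σ : K →+* K)

lemma skew_div (b : K) : ∀ (n : ℕ) (P : Polynomial K), P.natDegree ≤ n →
    ∃ Q : Polynomial K, P = skewMul σ Q (X - C b) + C (skewEval σ P b) ∧ Q.natDegree ≤ n - 1 := by
  intro n
  induction n with
  | zero =>
    intro P hP
    obtain ⟨c, rfl⟩ : ∃ c, P = C c := ⟨P.coeff 0, Polynomial.eq_C_of_natDegree_le_zero hP⟩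
    exact ⟨0, by rw [skewMul_zero_left, zero_add, skewEval_C], by simp⟩
  | succ n ih =>
    intro P hP
    by_cases h : P.natDegree ≤ n
    · obtain ⟨Q, h1, h2⟩ := ih P h
      exact ⟨Q, h1, le_trans h2 (by omega)⟩
    · have hdeg : P.natDegree = n + 1 := le_antisymm hP (by omega)
      have hPne : P ≠ 0 := fun h0 => by simp [h0] at hdeg
      set q := P.leadingCoeff with hq
      have hqne : q ≠ 0 := leadingCoeff_ne_zero.mpr hPne
      set S := skewMul σ (monomial n q) (X - C b) with hS
      have hSeq : S = monomial (n+1) q - monomial n (q * (⇑σ)^[n] b) := by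
        rw [hS, skewMul_sub_right, ← monomial_one_one_eq_X, ← monomial_zero_left,
          skewMul_monomial_monomial, skewMul_monomial_monomial, iterate_map_one, mul_one]
        norm_num
      set P' := P - S with hP'
      have hP'eq : P' = P.eraseLead + monomial n (q * (⇑σ)^[n] b) := by
        rw [hP', hSeq, ← Polynomial.self_sub_monomial_natDegree_leadingCoeff, hdeg, ← hq]
        ring
      have hP'deg : P'.natDegree ≤ n := by
        rw [hP'eq]
        refine le_trans (natDegree_add_le _ _) (max_le ?_ (natDegree_monomial_le _))
        exact le_trans P.eraseLead_natDegree_le (by omega)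
      obtain ⟨Q', hQ1, hQ2⟩ := ih P' hP'deg
      have hSroot : skewEval σ S b = 0 := by
        rw [hS]
        exact skewEval_skewMul_of_root σ _ _ b (by rw [skewEval_X_sub_C, sub_self])
      have hEv : skewEval σ P' b = skewEval σ P b := by
        rw [hP', skewEval_sub, hSroot, sub_zero]
      refine ⟨Q' + monomial n q, ?_, ?_⟩
      · calc P = P' + S := by rw [hP']; ring
          _ = (skewMul σ Q' (X - C b) + C (skewEval σ P b)) + S := by rw [hQ1, hEv]
          _ = skewMul σ (Q' + monomial n q) (X - C b) + C (skewEval σ P b) := by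
              rw [skewMul_add_left, hS]; ring
      · refine le_trans (natDegree_add_le _ _) (max_le (le_trans hQ2 (by omega)) ?_)
        exact le_trans (natDegree_monomial_le _) (by omega)

end BW5

namespace BW6
open BW BW2 BW3 BW4 BW5

variable (σ : K →+* K)

lemma skewConjugate_refl (a : K) : SkewConjugate σ a a := ⟨1, one_ne_zero, by simp⟩

lemma skewConjugate_of_eq {a b : K} (h : a = b) : SkewConjugate σ a b := h ▸ skewConjugate_refl σ b

lemma skewConjugate_symm {a b : K} : SkewConjugate σ a b → SkewConjugate σ b a := by
  rintro ⟨x, hx, rfl⟩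
  refine ⟨x⁻¹, inv_ne_zero hx, ?_⟩
  rw [map_inv₀, inv_inv]
  field_simp [sig_ne_zero σ hx]

lemma skewConjugate_trans {a b c : K} :
    SkewConjugate σ a b → SkewConjugate σ b c → SkewConjugate σ a c := by
  rintro ⟨x, hx, rfl⟩ ⟨y, hy, rfl⟩
  refine ⟨x * y, mul_ne_zero hx hy, ?_⟩
  rw [map_mul, mul_inv]
  ring

lemma skewConjugate_conj {x : K} (hx : x ≠ 0) (d : K) : SkewConjugate σ (σ x * d * x⁻¹) d :=
  ⟨x, hx, rfl⟩

end BW6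

namespace BW7
open BW BW2 BW3 BW4 BW5 BW6

variable (σ : K →+* K)

lemma key : ∀ (m : ℕ) (d x : Fin m → K), (∀ k, x k ≠ 0) →
    (∀ k l, k ≠ l → d k = d l ∨ ¬ SkewConjugate σ (d k) (d l)) →
    (∀ k l, k ≠ l → d k = d l → d k ≠ 0 ∧ ∀ c₁ c₂ : K, σ c₁ = c₁ → σ c₂ = c₂ →
        c₁ * x k + c₂ * x l = 0 → c₁ = 0 ∧ c₂ = 0) →
    (∀ k l j, k ≠ l → l ≠ j → k ≠ j → ¬(d k = d l ∧ d k = d j)) →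
    ∀ P : Polynomial K, P.degree < (m : ℕ) →
      (∀ k, skewEval σ P (σ (x k) * d k * (x k)⁻¹) = 0) → P = 0 := by
  intro m
  induction m with
  | zero =>
    intro d x _ _ _ _ P hdeg _
    rw [Nat.cast_zero] at hdeg
    by_contra hP
    exact absurd hdeg (not_lt.mpr (zero_le_degree_iff.mpr hP))
  | succ m ih =>
    intro d x hx hA hB hC P hdeg hroot
    by_contra hP
    have hNle : P.natDegree ≤ m := by
      have := (natDegree_lt_iff_degree_lt hP).mpr hdeg
      omega
    set k₀ : Fin (m + 1) := Fin.last m with hk₀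
    have hN1 : 1 ≤ P.natDegree := by
      by_contra h
      obtain ⟨c, hc⟩ : ∃ c, P = C c := ⟨P.coeff 0, eq_C_of_natDegree_le_zero (by omega)⟩
      have h2 := hroot k₀
      rw [hc, skewEval_C] at h2
      exact hP (by rw [hc, h2, map_zero])
    have hm1 : 1 ≤ m := le_trans hN1 hNle
    set b : K := σ (x k₀) * d k₀ * (x k₀)⁻¹ with hbdef
    have hbconj : SkewConjugate σ b (d k₀) := ⟨x k₀, hx k₀, rfl⟩
    obtain ⟨Q, hQ1, hQ2⟩ := skew_div σ b P.natDegree P le_rfl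
    have hPb : skewEval σ P b = 0 := hroot k₀
    rw [hPb, map_zero, add_zero] at hQ1
    have hQdeg : Q.degree < ((m : ℕ) : WithBot ℕ) := by
      refine lt_of_le_of_lt degree_le_natDegree ?_
      exact_mod_cast (by omega : Q.natDegree < m)
    -- the kernel argument
    have hker : ∀ l : Fin (m + 1), l ≠ k₀ → ∀ y : K, y ≠ 0 →
        σ y * d l = b * y → d l = d k₀ := by
      intro l hl y hy hEq
      have h1 : SkewConjugate σ b (d l) := ⟨y, hy, by rw [hEq]; field_simp⟩
      rcases hA l k₀ hl with he | hne
      · exact he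
      · exact absurd (skewConjugate_trans σ (skewConjugate_symm σ h1) hbconj) hne
    -- main per-point fact
    have hmain : ∀ l : Fin (m + 1), l ≠ k₀ →
        (σ (x l) * d l - b * x l ≠ 0) ∧
        skewEval σ Q (σ (σ (x l) * d l - b * x l) * d l * (σ (x l) * d l - b * x l)⁻¹) = 0 := by
      intro l hl
      have hxl := hx l
      set e : K := σ (x l) * d l * (x l)⁻¹ - b with hedef
      have hex : e * x l = σ (x l) * d l - b * x l := by
        rw [hedef]; field_simp
      have hene : e ≠ 0 := by
        intro h
        have hEq : σ (x l) * d l = b * x l := by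
          have h2 : σ (x l) * d l * (x l)⁻¹ = b := by
            have := sub_eq_zero.mp h; exact this
          rw [← h2]; field_simp
        have hd : d l = d k₀ := hker l hl (x l) hxl hEq
        obtain ⟨hd0, hind⟩ := hB l k₀ hl hd
        have hσx₀ : σ (x k₀) ≠ 0 := sig_ne_zero σ (hx k₀)
        have hc : σ (x l * (x k₀)⁻¹) = x l * (x k₀)⁻¹ := by
          have h3 : σ (x l) * d l = σ (x k₀) * d l * (x k₀)⁻¹ * x l := by
            rw [hEq, hbdef, ← hd]
          have h4 : σ (x l) = σ (x k₀) * (x k₀)⁻¹ * x l := by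
            have h5 : σ (x l) * d l = (σ (x k₀) * (x k₀)⁻¹ * x l) * d l := by
              linear_combination h3
            exact mul_right_cancel₀ hd0 h5
          rw [map_mul, map_inv₀, h4]
          calc σ (x k₀) * (x k₀)⁻¹ * x l * (σ (x k₀))⁻¹
              = (σ (x k₀) * (σ (x k₀))⁻¹) * ((x k₀)⁻¹ * x l) := by ring
            _ = x l * (x k₀)⁻¹ := by rw [mul_inv_cancel₀ hσx₀, one_mul]; ring
        have := hind 1 (-(x l * (x k₀)⁻¹)) (map_one σ) (by rw [map_neg, hc]) ?_
        · exact one_ne_zero this.1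
        · have hxk0 := hx k₀
          field_simp
          ring
      refine ⟨by rw [← hex]; exact mul_ne_zero hene hxl, ?_⟩
      have h0 := hroot l
      rw [hQ1, skewEval_skewMul, skewEval_X_sub_C] at h0
      have h0' : skewLam σ Q (σ (x l) * d l * (x l)⁻¹) e = 0 := h0
      rw [skewLam_eq σ Q _ hene] at h0'
      rcases mul_eq_zero.mp h0' with h1 | h1
      · rw [← hex]
        have hpt : σ e * (σ (x l) * d l * (x l)⁻¹) * e⁻¹ = σ (e * x l) * d l * (e * x l)⁻¹ := by
          rw [map_mul, mul_inv]
          field_simp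
        rw [← hpt]
        exact h1
      · exact absurd h1 hene
    -- new configuration
    set d' : Fin m → K := fun k => d k.castSucc with hd'
    set x' : Fin m → K := fun k => σ (x k.castSucc) * d k.castSucc - b * x k.castSucc with hx'
    have hcsne : ∀ k : Fin m, k.castSucc ≠ k₀ := fun k => (Fin.castSucc_lt_last k).ne
    have hQ0 : Q = 0 := by
      refine ih d' x' (fun k => (hmain _ (hcsne k)).1) ?_ ?_ ?_ Q hQdeg ?_
      · intro k l hkl
        exact hA _ _ (fun h => hkl (Fin.castSucc_injective m h))
      · intro k l hkl hdd
        have hkl' : k.castSucc ≠ l.castSucc := fun h => hkl (Fin.castSucc_injective m h)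
        have hdne : d k.castSucc ≠ d k₀ := by
          intro h
          exact hC k.castSucc l.castSucc k₀ hkl' (hcsne l) (hcsne k) ⟨hdd, h⟩
        refine ⟨(hB _ _ hkl' hdd).1, ?_⟩
        intro c₁ c₂ hc₁ hc₂ hsum
        set y : K := c₁ * x k.castSucc + c₂ * x l.castSucc with hy
        have hyd : σ y * d k.castSucc = b * y := by
          rw [hy, map_add, map_mul, map_mul, hc₁, hc₂]
          have hdd' : d l.castSucc = d k.castSucc := hdd.symm
          calc (c₁ * σ (x k.castSucc) + c₂ * σ (x l.castSucc)) * d k.castSucc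
              = c₁ * (σ (x k.castSucc) * d k.castSucc) + c₂ * (σ (x l.castSucc) * d l.castSucc) := by
                rw [hdd']; ring
            _ = b * (c₁ * x k.castSucc + c₂ * x l.castSucc) := by
                have h5 : c₁ * x' k + c₂ * x' l = 0 := hsum
                rw [hx'] at h5
                simp only at h5
                linear_combination h5
        by_cases hy0 : y = 0
        · exact (hB _ _ hkl' hdd).2 c₁ c₂ hc₁ hc₂ hy0
        · exact absurd (hker _ (hcsne k) y hy0 hyd) hdne
      · intro k l j h1 h2 h3
        exact hC _ _ _ (fun h => h1 (Fin.castSucc_injective m h))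
          (fun h => h2 (Fin.castSucc_injective m h)) (fun h => h3 (Fin.castSucc_injective m h))
      · intro k
        exact (hmain _ (hcsne k)).2
    rw [hQ0, skewMul_zero_left] at hQ1
    exact hP hQ1

end BW7

namespace BW8
open BW BW2 BW3 BW4 BW5 BW6 BW7

variable (σ : K →+* K)

lemma skewMul_one_right (P : Polynomial K) : skewMul σ P 1 = P := by
  induction P using Polynomial.induction_on' with
  | add P Q h1 h2 => rw [skewMul_add_left, h1, h2]
  | monomial j q =>
    rw [show (1 : Polynomial K) = monomial 0 1 from by simp, skewMul_monomial_monomial]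
    simp

/-- Iterative construction of the minimal skew polynomial of `a' 0, …, a' (k-1)`. -/
noncomputable def buildP (a' : ℕ → K) : ℕ → Polynomial K
  | 0 => 1
  | k + 1 =>
    skewMul σ (X - C (σ (skewEval σ (buildP a' k) (a' k)) * a' k *
      (skewEval σ (buildP a' k) (a' k))⁻¹)) (buildP a' k)

lemma buildP_succ (a' : ℕ → K) (k : ℕ) :
    buildP σ a' (k + 1) = skewMul σ (X - C (σ (skewEval σ (buildP σ a' k) (a' k)) * a' k *
      (skewEval σ (buildP σ a' k) (a' k))⁻¹)) (buildP σ a' k) := rfl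

lemma buildP_monic (a' : ℕ → K) (k : ℕ) :
    (buildP σ a' k).Monic ∧ (buildP σ a' k).natDegree = k := by
  induction k with
  | zero => exact ⟨monic_one, natDegree_one⟩
  | succ k ih =>
    obtain ⟨hm, hd⟩ := ih
    rw [buildP_succ, skewMul_X_sub_C_left]
    set c : K := σ (skewEval σ (buildP σ a' k) (a' k)) * a' k *
      (skewEval σ (buildP σ a' k) (a' k))⁻¹
    set P := buildP σ a' k
    have hA : ((P.map σ) * X).Monic := (hm.map σ).mul monic_X
    have hAdeg : ((P.map σ) * X).natDegree = k + 1 := by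
      rw [natDegree_mul_X (hm.map σ).ne_zero, hm.natDegree_map, hd]
    have hAdeg' : ((P.map σ) * X).degree = ((k + 1 : ℕ) : WithBot ℕ) := by
      rw [degree_eq_natDegree hA.ne_zero, hAdeg]
    have hBdeg : (C c * P).degree < ((P.map σ) * X).degree := by
      rw [hAdeg']
      have hle : (C c * P).degree ≤ P.degree := by
        rcases eq_or_ne c 0 with hc0 | hc
        · rw [hc0]; simp
        · rw [degree_C_mul hc]
      refine lt_of_le_of_lt (le_trans hle degree_le_natDegree) ?_
      rw [hd]
      exact_mod_cast Nat.lt_succ_self k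
    have hsub : (P.map σ) * X - C c * P = (P.map σ) * X + -(C c * P) := by ring
    have hdegneg : (-(C c * P)).degree < ((P.map σ) * X).degree := by
      rwa [degree_neg]
    constructor
    · rw [hsub]; exact hA.add_of_left hdegneg
    · rw [hsub]
      have := degree_add_eq_left_of_degree_lt hdegneg
      rw [hAdeg'] at this
      exact natDegree_eq_of_degree_eq_some this

lemma buildP_root (a' : ℕ → K) (k : ℕ) : ∀ i < k, skewEval σ (buildP σ a' k) (a' i) = 0 := by
  induction k with
  | zero => intro i hi; omega
  | succ k ih =>
    intro i hi
    rw [buildP_succ]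
    rcases Nat.lt_succ_iff_lt_or_eq.mp hi with hik | rfl
    · exact skewEval_skewMul_of_root σ _ _ _ (ih i hik)
    · rw [skewEval_skewMul]
      set e : K := skewEval σ (buildP σ a' i) (a' i) with he
      by_cases he0 : e = 0
      · rw [he0, skewLam_zero]
      · rw [skewLam_eq σ _ _ he0, skewEval_X_sub_C, sub_self, zero_mul]

end BW8

open BW BW2 BW3 BW4 BW5 BW6 BW7 BW8 in
/-- Bray–Whaples for skew polynomials: if `a₁, …, aₙ` are mutually non-σ-conjugate, there is a
unique monic skew polynomial of degree `n` whose right roots are exactly `a₁, …, aₙ`; moreover any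
skew polynomial vanishing at all the `aᵢ` is a left multiple of it. -/
theorem stmt_1 {K : Type*} [Field K] (σ : K →+* K) {n : ℕ} (a : Fin n → K)
    (hna : ∀ i j : Fin n, i ≠ j → ¬ SkewConjugate σ (a i) (a j)) :
    (∃! P : Polynomial K, P.Monic ∧ P.natDegree = n ∧
        (∀ b : K, skewEval σ P b = 0 ↔ ∃ i, b = a i)) ∧
    (∀ P : Polynomial K, (P.Monic ∧ P.natDegree = n ∧
        (∀ b : K, skewEval σ P b = 0 ↔ ∃ i, b = a i)) →
      ∀ Q : Polynomial K, (∀ i, skewEval σ Q (a i) = 0) →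
        ∃ R : Polynomial K, Q = skewMul σ R P) := by
  classical
  -- only a polynomial of degree `< n` vanishing at all `a i` is `0`
  have distinct_key : ∀ D : Polynomial K, D.degree < ((n : ℕ) : WithBot ℕ) →
      (∀ i, skewEval σ D (a i) = 0) → D = 0 := by
    intro D hdeg hvan
    refine key σ n a (fun _ => 1) (fun _ => one_ne_zero) ?_ ?_ ?_ D hdeg ?_
    · intro k l hkl; exact Or.inr (hna k l hkl)
    · intro k l hkl hd; exact absurd (skewConjugate_of_eq σ hd) (hna k l hkl)
    · intro k l j h1 _ _ h; exact absurd (skewConjugate_of_eq σ h.1) (hna k l h1)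
    · intro k; simpa using hvan k
  -- `snoc` configurations have small conjugacy classes
  have hCgen : ∀ z : K, ∀ k l j : Fin (n+1), k ≠ l → l ≠ j → k ≠ j →
      ¬((Fin.snoc a z : Fin (n+1) → K) k = (Fin.snoc a z : Fin (n+1) → K) l ∧
        (Fin.snoc a z : Fin (n+1) → K) k = (Fin.snoc a z : Fin (n+1) → K) j) := by
    intro z k l j hkl hlj hkj h
    obtain ⟨h1, h2⟩ := h
    have hinj : ∀ u v : Fin (n+1), u ≠ v → u ≠ Fin.last n → v ≠ Fin.last n →
        (Fin.snoc a z : Fin (n+1) → K) u ≠ (Fin.snoc a z : Fin (n+1) → K) v := by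
      intro u v huv hu hv heq
      obtain ⟨u', hu'⟩ := Fin.exists_castSucc_eq.mpr hu
      obtain ⟨v', hv'⟩ := Fin.exists_castSucc_eq.mpr hv
      rw [← hu', ← hv', Fin.snoc_castSucc, Fin.snoc_castSucc] at heq
      refine hna u' v' (fun hh => huv ?_) (skewConjugate_of_eq σ heq)
      rw [← hu', ← hv', hh]
    by_cases hk : k = Fin.last n
    · exact hinj l j hlj (fun h => hkl (hk.trans h.symm)) (fun h => hkj (hk.trans h.symm))
        (h1.symm.trans h2)
    · by_cases hl : l = Fin.last n
      · exact hinj k j hkj hk (fun h => hlj (hl.trans h.symm)) h2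
      · exact hinj k l hkl hk hl h1
  -- construction of the minimal polynomial
  set a' : ℕ → K := fun k => if h : k < n then a ⟨k, h⟩ else 0 with ha'
  set P₀ : Polynomial K := buildP σ a' n with hP₀
  have hmono : P₀.Monic := (buildP_monic σ a' n).1
  have hdeg0 : P₀.natDegree = n := (buildP_monic σ a' n).2
  have hvan : ∀ i : Fin n, skewEval σ P₀ (a i) = 0 := by
    intro i
    have h := buildP_root σ a' n i.val i.isLt
    have h2 : a' i.val = a i := by rw [ha']; simp [i.isLt]
    rwa [h2] at h
  have hdegP₀ : P₀.degree = ((n : ℕ) : WithBot ℕ) := by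
    rw [degree_eq_natDegree hmono.ne_zero, hdeg0]
  -- the roots of `P₀` are exactly the `a i`
  have hexact : ∀ b : K, skewEval σ P₀ b = 0 → ∃ i, b = a i := by
    intro b hb
    by_contra hbn
    push_neg at hbn
    have hdeglt : P₀.degree < (((n + 1 : ℕ)) : WithBot ℕ) := by
      rw [hdegP₀]; exact_mod_cast Nat.lt_succ_self n
    by_cases hcase : ∃ i₀, SkewConjugate σ b (a i₀)
    · obtain ⟨i₀, x, hx0, hbx⟩ := hcase
      have hai₀ : a i₀ ≠ 0 := by
        intro h0
        apply hbn i₀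
        rw [hbx, h0]
        simp
      have hfix : ∀ c₁ c₂ : K, σ c₁ = c₁ → σ c₂ = c₂ → c₁ + c₂ * x = 0 → c₁ = 0 ∧ c₂ = 0 := by
        intro c₁ c₂ hc₁ hc₂ hsum
        by_cases hc20 : c₂ = 0
        · refine ⟨?_, hc20⟩
          rw [hc20] at hsum; simpa using hsum
        · exfalso
          have hxval : x = -(c₁ * c₂⁻¹) := by
            field_simp
            linear_combination hsum
          have hσx : σ x = x := by rw [hxval, map_neg, map_mul, map_inv₀, hc₁, hc₂]
          apply hbn i₀
          rw [hbx, hσx, mul_comm x (a i₀), mul_inv_cancel_right₀ hx0]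
      refine absurd (key σ (n+1) (Fin.snoc a (a i₀)) (Fin.snoc (fun _ => 1) x)
        ?_ ?_ ?_ (hCgen (a i₀)) P₀ hdeglt ?_) hmono.ne_zero
      · intro k
        induction k using Fin.lastCases with
        | last => simpa using hx0
        | cast j => simp
      · intro k l hkl
        induction k using Fin.lastCases with
        | last =>
          induction l using Fin.lastCases with
          | last => exact absurd rfl hkl
          | cast j =>
            simp only [Fin.snoc_last, Fin.snoc_castSucc]
            by_cases hji : i₀ = j
            · exact Or.inl (by rw [hji])
            · exact Or.inr (hna i₀ j hji)
        | cast j =>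
          induction l using Fin.lastCases with
          | last =>
            simp only [Fin.snoc_last, Fin.snoc_castSucc]
            by_cases hji : j = i₀
            · exact Or.inl (by rw [hji])
            · exact Or.inr (hna j i₀ hji)
          | cast j' =>
            simp only [Fin.snoc_castSucc]
            exact Or.inr (hna j j' (fun h => hkl (by rw [h])))
      · intro k l hkl hd
        induction k using Fin.lastCases with
        | last =>
          induction l using Fin.lastCases with
          | last => exact absurd rfl hkl
          | cast j =>
            rw [Fin.snoc_last, Fin.snoc_castSucc] at hd
            refine ⟨by rw [Fin.snoc_last]; exact hai₀, ?_⟩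
            intro c₁ c₂ hc₁ hc₂ hsum
            rw [Fin.snoc_last, Fin.snoc_castSucc] at hsum
            have := hfix c₂ c₁ hc₂ hc₁ (by linear_combination hsum)
            exact ⟨this.2, this.1⟩
        | cast j =>
          induction l using Fin.lastCases with
          | last =>
            rw [Fin.snoc_last, Fin.snoc_castSucc] at hd
            refine ⟨by rw [Fin.snoc_castSucc, hd]; exact hai₀, ?_⟩
            intro c₁ c₂ hc₁ hc₂ hsum
            rw [Fin.snoc_last, Fin.snoc_castSucc] at hsum
            exact hfix c₁ c₂ hc₁ hc₂ (by linear_combination hsum)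
          | cast j' =>
            rw [Fin.snoc_castSucc, Fin.snoc_castSucc] at hd
            exact (hna j j' (fun h => hkl (by rw [h])) (skewConjugate_of_eq σ hd)).elim
      · intro k
        induction k using Fin.lastCases with
        | last =>
          simp only [Fin.snoc_last]
          rw [← hbx]
          exact hb
        | cast j =>
          simp only [Fin.snoc_castSucc]
          simpa using hvan j
    · push_neg at hcase
      refine absurd (key σ (n+1) (Fin.snoc a b) (fun _ => 1)
        (fun _ => one_ne_zero) ?_ ?_ (hCgen b) P₀ hdeglt ?_) hmono.ne_zero
      · intro k l hkl
        induction k using Fin.lastCases with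
        | last =>
          induction l using Fin.lastCases with
          | last => exact absurd rfl hkl
          | cast j =>
            simp only [Fin.snoc_last, Fin.snoc_castSucc]
            exact Or.inr (hcase j)
        | cast j =>
          induction l using Fin.lastCases with
          | last =>
            simp only [Fin.snoc_last, Fin.snoc_castSucc]
            exact Or.inr (fun hc => hcase j (skewConjugate_symm σ hc))
          | cast j' =>
            simp only [Fin.snoc_castSucc]
            exact Or.inr (hna j j' (fun h => hkl (by rw [h])))
      · intro k l hkl hd
        induction k using Fin.lastCases with
        | last =>
          induction l using Fin.lastCases with
          | last => exact absurd rfl hkl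
          | cast j =>
            rw [Fin.snoc_last, Fin.snoc_castSucc] at hd
            exact (hbn j hd).elim
        | cast j =>
          induction l using Fin.lastCases with
          | last =>
            rw [Fin.snoc_last, Fin.snoc_castSucc] at hd
            exact (hbn j hd.symm).elim
          | cast j' =>
            rw [Fin.snoc_castSucc, Fin.snoc_castSucc] at hd
            exact (hna j j' (fun h => hkl (by rw [h])) (skewConjugate_of_eq σ hd)).elim
      · intro k
        induction k using Fin.lastCases with
        | last =>
          simp only [Fin.snoc_last]
          simpa using hb
        | cast j =>
          simp only [Fin.snoc_castSucc]
          simpa using hvan j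
  have hroots : ∀ b : K, skewEval σ P₀ b = 0 ↔ ∃ i, b = a i := by
    intro b
    constructor
    · exact hexact b
    · rintro ⟨i, rfl⟩; exact hvan i
  -- uniqueness
  have huniq : ∀ P1 P2 : Polynomial K,
      (P1.Monic ∧ P1.natDegree = n ∧ (∀ b : K, skewEval σ P1 b = 0 ↔ ∃ i, b = a i)) →
      (P2.Monic ∧ P2.natDegree = n ∧ (∀ b : K, skewEval σ P2 b = 0 ↔ ∃ i, b = a i)) →
      P1 = P2 := by
    rintro P1 P2 ⟨hm1, hd1, hr1⟩ ⟨hm2, hd2, hr2⟩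
    have hdd : P1.degree = P2.degree := by
      rw [degree_eq_natDegree hm1.ne_zero, degree_eq_natDegree hm2.ne_zero, hd1, hd2]
    have hlt : (P1 - P2).degree < P1.degree :=
      degree_sub_lt hdd hm1.ne_zero (by rw [hm1.leadingCoeff, hm2.leadingCoeff])
    have hD0 : P1 - P2 = 0 := by
      refine distinct_key (P1 - P2) ?_ ?_
      · rwa [degree_eq_natDegree hm1.ne_zero, hd1] at hlt
      · intro i
        rw [skewEval_sub, (hr1 (a i)).mpr ⟨i, rfl⟩, (hr2 (a i)).mpr ⟨i, rfl⟩, sub_zero]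
    exact sub_eq_zero.mp hD0
  -- divisibility
  have hdiv : ∀ P : Polynomial K, (P.Monic ∧ P.natDegree = n ∧
        (∀ b : K, skewEval σ P b = 0 ↔ ∃ i, b = a i)) →
      ∀ Q : Polynomial K, (∀ i, skewEval σ Q (a i) = 0) →
        ∃ R : Polynomial K, Q = skewMul σ R P := by
    rintro P ⟨hPm, hPd, hPr⟩ Q hQv
    have hProot : ∀ i, skewEval σ P (a i) = 0 := fun i => (hPr (a i)).mpr ⟨i, rfl⟩
    rcases Nat.eq_zero_or_pos n with hn0 | hn1
    · have hP1 : P = 1 := by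
        have h1 : P = C (P.coeff 0) := eq_C_of_natDegree_le_zero (by rw [hPd, hn0])
        have h2 : P.coeff 0 = 1 := by
          have h3 := hPm
          rwa [Monic, leadingCoeff, hPd, hn0] at h3
        rw [h1, h2, map_one]
      exact ⟨Q, by rw [hP1, skewMul_one_right]⟩
    · suffices h : ∀ N (Q : Polynomial K), Q.natDegree ≤ N → (∀ i, skewEval σ Q (a i) = 0) →
          ∃ R, Q = skewMul σ R P from h Q.natDegree Q le_rfl hQv
      intro N
      induction N with
      | zero =>
        intro Q hQd hQv
        have hQ0 : Q = 0 := by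
          refine distinct_key Q (lt_of_le_of_lt degree_le_natDegree ?_) hQv
          exact_mod_cast lt_of_le_of_lt hQd hn1
        exact ⟨0, by rw [hQ0, skewMul_zero_left]⟩
      | succ N ihN =>
        intro Q hQd hQv
        by_cases hle : Q.natDegree ≤ N
        · exact ihN Q hle hQv
        · have hQdeg : Q.natDegree = N + 1 := le_antisymm hQd (by omega)
          have hQne : Q ≠ 0 := fun h0 => by simp [h0] at hQdeg
          by_cases hlt : Q.natDegree < n
          · have hQ0 : Q = 0 := by
              refine distinct_key Q ?_ hQv
              rw [degree_eq_natDegree hQne]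
              exact_mod_cast hlt
            exact absurd hQ0 hQne
          · push_neg at hlt
            set k := Q.natDegree - n with hk
            set q := Q.leadingCoeff with hq
            have hqne : q ≠ 0 := leadingCoeff_ne_zero.mpr hQne
            set S := skewMul σ (monomial k q) P with hS
            have hSd : S.natDegree = Q.natDegree := by
              rw [hS, skewMul_monomial_left_natDegree σ k hqne hPm, hPd]
              omega
            have hSl : S.leadingCoeff = q := by
              rw [hS]; exact skewMul_monomial_left_leadingCoeff σ k q hPm
            have hSne : S ≠ 0 := by
              rw [hS]; exact skewMul_monomial_left_ne_zero σ k hqne hPm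
            have hdd : Q.degree = S.degree := by
              rw [degree_eq_natDegree hQne, degree_eq_natDegree hSne, hSd]
            have hsub : (Q - S).degree < Q.degree :=
              degree_sub_lt hdd hQne (by rw [hSl])
            have hQ'v : ∀ i, skewEval σ (Q - S) (a i) = 0 := by
              intro i
              rw [skewEval_sub, hQv i, hS,
                skewEval_skewMul_of_root σ _ _ _ (hProot i), sub_zero]
            have hQ'd : (Q - S).natDegree ≤ N := by
              by_cases h0 : Q - S = 0
              · rw [h0]; simp
              · have := natDegree_lt_natDegree h0 hsub
                omega
            obtain ⟨R', hR'⟩ := ihN (Q - S) hQ'd hQ'v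
            refine ⟨R' + monomial k q, ?_⟩
            rw [skewMul_add_left, ← hR', ← hS]
            ring
  exact ⟨⟨P₀, ⟨hmono, hdeg0, hroots⟩,
    fun P' h' => huniq P' P₀ h' ⟨hmono, hdeg0, hroots⟩⟩, hdiv⟩
end

section
/- Let (K, σ) be a σ-field and let S = {a_1, …, a_n} ⊆ K be a P-independent set of n distinct elements with minimal polynomial P_S(T) ∈ K[T;σ]. Then det(V^σ(a_1,…,a_n)) ≠ 0 and for every a ∈ K one has P_S(a) = det(V^σ(a_1,…,a_n,a)) / det(V^σ(a_1,…,a_n)). -/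
open Polynomial

variable {K : Type*} [Field K]

/-- `P` vanishes (right-evaluates to `0`) on the set `S`. -/
def SkewVanishes (σ : K →+* K) (P : Polynomial K) (S : Set K) : Prop :=
  ∀ x ∈ S, skewEval σ P x = 0

/-- `P` is the minimal skew polynomial of `S`: monic, vanishing on `S`, and every skew
polynomial vanishing on `S` is a left multiple of `P` in `K[T;σ]`. -/
def IsMinSkewPoly (σ : K →+* K) (P : Polynomial K) (S : Set K) : Prop :=
  P.Monic ∧ SkewVanishes σ P S ∧
    ∀ Q : Polynomial K, SkewVanishes σ Q S → ∃ R : Polynomial K, Q = skewMul σ R P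

/-- `S` is P-independent: no `a ∈ S` is a right root of the minimal skew polynomial of
`S \ {a}`. -/
def PIndependent (σ : K →+* K) (S : Set K) : Prop :=
  ∀ a ∈ S, ∀ P : Polynomial K, IsMinSkewPoly σ P (S \ {a}) → skewEval σ P a ≠ 0

/-- The σ-Vandermonde matrix: entry in row `i`, column `j` is `N_i(a_j)`. -/
noncomputable def skewVandermonde (σ : K →+* K) {n : ℕ} (a : Fin n → K) :
    Matrix (Fin n) (Fin n) K :=
  Matrix.of fun i j => skewN σ (i : ℕ) (a j)

section Aux

variable {σ : K →+* K}

lemma skewN_zero (a : K) : skewN σ 0 a = 1 := rfl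

lemma skewN_succ (i : ℕ) (a : K) : skewN σ (i + 1) a = σ (skewN σ i a) * a := rfl

lemma skewN_one (a : K) : skewN σ 1 a = a := by simp [skewN]

lemma skewN_succ' (i : ℕ) (a : K) : skewN σ (i + 1) a = (⇑σ)^[i] a * skewN σ i a := by
  induction i with
  | zero => simp [skewN]
  | succ k ih =>
    rw [skewN_succ (i := k + 1), ih, map_mul, Function.iterate_succ_apply', mul_assoc,
      ← skewN_succ, ih]

lemma skewN_add (i j : ℕ) (a : K) :
    skewN σ (i + j) a = (⇑σ)^[i] (skewN σ j a) * skewN σ i a := by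
  induction j with
  | zero => simp [skewN_zero]
  | succ k ih =>
    rw [show i + (k + 1) = (i + k) + 1 from rfl, skewN_succ', ih, skewN_succ' k,
      iterate_map_mul, ← Function.iterate_add_apply]
    ring

lemma skewEval_eq_sum (P : Polynomial K) (x : K) :
    skewEval σ P x = P.sum fun i c => c * skewN σ i x := rfl

lemma skewEval_eq_sum_range {P : Polynomial K} {N : ℕ} (h : P.natDegree < N) (x : K) :
    skewEval σ P x = ∑ i ∈ Finset.range N, P.coeff i * skewN σ i x := by
  rw [skewEval]
  exact Finset.sum_subset (supp_subset_range h)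
    (fun i _ hi => by rw [notMem_support_iff.mp hi, zero_mul])

lemma skewEval_monomial (i : ℕ) (c : K) (x : K) :
    skewEval σ (monomial i c) x = c * skewN σ i x := by
  rw [skewEval_eq_sum]
  exact Polynomial.sum_monomial_index c _ (by simp)

lemma skewEval_add (P Q : Polynomial K) (x : K) :
    skewEval σ (P + Q) x = skewEval σ P x + skewEval σ Q x := by
  simp only [skewEval_eq_sum]
  exact Polynomial.sum_add_index P Q _ (by simp) (fun i b c => add_mul b c _)

/-- `skewEval` as an additive monoid hom in the polynomial. -/
noncomputable def skewEvalAddHom (σ : K →+* K) (x : K) : Polynomial K →+ K where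
  toFun P := skewEval σ P x
  map_zero' := by simp [skewEval]
  map_add' P Q := skewEval_add P Q x

lemma skewEval_finset_sum {ι : Type*} (s : Finset ι) (f : ι → Polynomial K) (x : K) :
    skewEval σ (∑ i ∈ s, f i) x = ∑ i ∈ s, skewEval σ (f i) x :=
  map_sum (skewEvalAddHom σ x) f s

lemma skewEval_sub (P Q : Polynomial K) (x : K) :
    skewEval σ (P - Q) x = skewEval σ P x - skewEval σ Q x :=
  map_sub (skewEvalAddHom σ x) P Q

lemma skewEval_C_mul (c : K) (P : Polynomial K) (x : K) :
    skewEval σ (C c * P) x = c * skewEval σ P x := by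
  rw [skewEval_eq_sum_range (Nat.lt_succ_of_le (natDegree_C_mul_le c P)) x,
    skewEval_eq_sum_range (Nat.lt_succ_self _) x, Finset.mul_sum]
  exact Finset.sum_congr rfl fun i _ => by rw [coeff_C_mul, mul_assoc]

lemma skewMul_eq (P Q : Polynomial K) :
    skewMul σ P Q = P.sum fun i c => C c * Q.map (σ ^ i) * X ^ i := by
  rw [skewMul, Polynomial.sum_def]
  refine Finset.sum_congr rfl fun i _ => ?_
  conv_rhs => rw [Q.as_sum_support]
  rw [Polynomial.map_sum, Finset.mul_sum, Finset.sum_mul]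
  refine Finset.sum_congr rfl fun j _ => ?_
  rw [C_mul_X_pow_eq_monomial, map_monomial, C_mul_monomial, X_pow_eq_monomial,
    monomial_mul_monomial, mul_one, add_comm j i, RingHom.coe_pow]

lemma skewMul_zero_left (Q : Polynomial K) : skewMul σ 0 Q = 0 := by
  rw [skewMul_eq, Polynomial.sum_zero_index]

lemma skewMul_add_left (P₁ P₂ Q : Polynomial K) :
    skewMul σ (P₁ + P₂) Q = skewMul σ P₁ Q + skewMul σ P₂ Q := by
  simp only [skewMul_eq]
  exact Polynomial.sum_add_index _ _ _ (fun i => by simp)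
    (fun i b c => by rw [C_add, add_mul, add_mul])

lemma skewMul_monomial_left (i : ℕ) (c : K) (Q : Polynomial K) :
    skewMul σ (monomial i c) Q = C c * Q.map (σ ^ i) * X ^ i := by
  rw [skewMul_eq]
  exact Polynomial.sum_monomial_index c _ (by simp)

lemma coeff_skewMul_top (P Q : Polynomial K) :
    (skewMul σ P Q).coeff (P.natDegree + Q.natDegree)
      = P.leadingCoeff * (⇑σ)^[P.natDegree] Q.leadingCoeff := by
  rw [skewMul_eq, Polynomial.sum_def, finset_sum_coeff]
  have h1 : ∀ i ∈ P.support, i ≠ P.natDegree →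
      (C (P.coeff i) * Q.map (σ ^ i) * X ^ i).coeff (P.natDegree + Q.natDegree) = 0 := by
    intro i hi hine
    have hle : i ≤ P.natDegree := le_natDegree_of_mem_supp i hi
    rw [coeff_mul_X_pow', if_pos (hle.trans (Nat.le_add_right _ _)), coeff_C_mul, coeff_map]
    have h3 : Q.natDegree < P.natDegree + Q.natDegree - i := by
      have h4 : i < P.natDegree := lt_of_le_of_ne hle hine
      omega
    rw [coeff_eq_zero_of_natDegree_lt h3, map_zero, mul_zero]
  have h2 : P.natDegree ∉ P.support →
      (C (P.coeff P.natDegree) * Q.map (σ ^ P.natDegree) * X ^ P.natDegree).coeff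
        (P.natDegree + Q.natDegree) = 0 := by
    intro h
    rw [notMem_support_iff.mp h]
    simp
  rw [Finset.sum_eq_single P.natDegree h1 h2, coeff_mul_X_pow',
    if_pos (Nat.le_add_right _ _), Nat.add_sub_cancel_left, coeff_C_mul, coeff_map,
    RingHom.coe_pow]
  rfl

lemma natDegree_skewMul_le (P Q : Polynomial K) :
    (skewMul σ P Q).natDegree ≤ P.natDegree + Q.natDegree := by
  rw [skewMul_eq, Polynomial.sum_def]
  refine natDegree_sum_le_of_forall_le _ _ fun i hi => ?_
  have h1 : i ≤ P.natDegree := le_natDegree_of_mem_supp i hi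
  refine natDegree_mul_le.trans ?_
  have h2 := natDegree_mul_le (p := C (P.coeff i)) (q := Q.map (σ ^ i))
  have h3 := natDegree_map_le (f := σ ^ i) (p := Q)
  rw [natDegree_X_pow]
  simp only [natDegree_C, zero_add] at h2
  omega

lemma skewEval_skewMul_monomial (i : ℕ) (c : K) (Q : Polynomial K) (x : K) :
    skewEval σ (skewMul σ (monomial i c) Q) x
      = c * (⇑σ)^[i] (skewEval σ Q x) * skewN σ i x := by
  rw [skewMul_monomial_left]
  have h : C c * Q.map (σ ^ i) * X ^ i
      = ∑ j ∈ Q.support, monomial (i + j) (c * (⇑σ)^[i] (Q.coeff j)) := by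
    conv_lhs => rw [Q.as_sum_support]
    rw [Polynomial.map_sum, Finset.mul_sum, Finset.sum_mul]
    refine Finset.sum_congr rfl fun j _ => ?_
    rw [map_monomial, C_mul_monomial, X_pow_eq_monomial, monomial_mul_monomial, mul_one,
      add_comm j i, RingHom.coe_pow]
  rw [h, skewEval_finset_sum]
  have hE : (⇑σ)^[i] (skewEval σ Q x)
      = ∑ j ∈ Q.support, (⇑σ)^[i] (Q.coeff j * skewN σ j x) := by
    rw [← RingHom.coe_pow, skewEval, map_sum]
  rw [hE, Finset.mul_sum, Finset.sum_mul]
  refine Finset.sum_congr rfl fun j _ => ?_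
  rw [skewEval_monomial, skewN_add, ← RingHom.coe_pow, map_mul]
  ring

lemma skewEval_skewMul (P Q : Polynomial K) (x : K) :
    skewEval σ (skewMul σ P Q) x
      = P.sum fun i c => c * (⇑σ)^[i] (skewEval σ Q x) * skewN σ i x := by
  induction P using Polynomial.induction_on' with
  | add p q hp hq =>
    rw [skewMul_add_left, skewEval_add, hp, hq,
      Polynomial.sum_add_index p q _ (fun i => by simp) (fun i b c => by rw [add_mul, add_mul])]
  | monomial m c =>
    rw [skewEval_skewMul_monomial, Polynomial.sum_monomial_index c _ (by simp)]

lemma skewEval_skewMul_eq_zero (P : Polynomial K) {Q : Polynomial K} {x : K}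
    (h : skewEval σ Q x = 0) : skewEval σ (skewMul σ P Q) x = 0 := by
  rw [skewEval_skewMul, h, Polynomial.sum_def]
  exact Finset.sum_eq_zero fun i _ => by simp

lemma skewEval_skewMul_linear (b : K) (Q : Polynomial K) (x : K) :
    skewEval σ (skewMul σ (X - C b) Q) x
      = σ (skewEval σ Q x) * x - b * skewEval σ Q x := by
  have hX : (X - C b : Polynomial K) = monomial 1 1 + monomial 0 (-b) := by
    rw [monomial_one_one_eq_X, monomial_zero_left, map_neg, sub_eq_add_neg]
  rw [hX, skewMul_add_left, skewEval_add, skewEval_skewMul_monomial,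
    skewEval_skewMul_monomial]
  simp only [skewN_one, skewN_zero, Function.iterate_one, Function.iterate_zero, id_eq,
    one_mul, mul_one]
  ring

lemma monic_skewMul {P Q : Polynomial K} (hP : P.Monic) (hQ : Q.Monic) :
    (skewMul σ P Q).Monic ∧ (skewMul σ P Q).natDegree = P.natDegree + Q.natDegree := by
  have hc : (skewMul σ P Q).coeff (P.natDegree + Q.natDegree) = 1 := by
    rw [coeff_skewMul_top, hP.leadingCoeff, hQ.leadingCoeff, iterate_map_one, one_mul]
  have hm : (skewMul σ P Q).Monic :=
    monic_of_natDegree_le_of_coeff_eq_one _ (natDegree_skewMul_le P Q) hc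
  refine ⟨hm, le_antisymm (natDegree_skewMul_le P Q) ?_⟩
  exact le_natDegree_of_ne_zero (by rw [hc]; exact one_ne_zero)

lemma skew_div (P : Polynomial K) (hP : P.Monic) (Q : Polynomial K) :
    ∃ R S : Polynomial K, Q = skewMul σ R P + S ∧ S.degree < P.degree := by
  have key : ∀ d : ℕ, ∀ Q : Polynomial K, Q.natDegree < d →
      ∃ R S : Polynomial K, Q = skewMul σ R P + S ∧ S.degree < P.degree := by
    intro d
    induction d with
    | zero => exact fun Q h => absurd h (Nat.not_lt_zero _)
    | succ d ih =>
      intro Q hQd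
      by_cases hlt : Q.degree < P.degree
      · exact ⟨0, Q, by rw [skewMul_zero_left, zero_add], hlt⟩
      · push_neg at hlt
        have hQ0 : Q ≠ 0 := by
          rintro rfl
          rw [degree_zero, le_bot_iff] at hlt
          exact hP.ne_zero (degree_eq_bot.mp hlt)
        have hPQ : P.natDegree ≤ Q.natDegree := natDegree_le_natDegree hlt
        set c := Q.leadingCoeff with hc
        have hc0 : c ≠ 0 := leadingCoeff_ne_zero.mpr hQ0
        set e := Q.natDegree - P.natDegree with he
        have hed : e + P.natDegree = Q.natDegree := by omega
        set T := skewMul σ (C c * X ^ e) P with hT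
        have h1 : (C c * X ^ e : Polynomial K).natDegree = e := natDegree_C_mul_X_pow e c hc0
        have hTd : T.natDegree ≤ Q.natDegree := by
          rw [hT]
          refine (natDegree_skewMul_le _ _).trans ?_
          omega
        have hTc : T.coeff Q.natDegree = c := by
          have h2 := coeff_skewMul_top (σ := σ) (C c * X ^ e) P
          rw [h1, hP.leadingCoeff, iterate_map_one, mul_one, hed,
            leadingCoeff_C_mul_X_pow] at h2
          rw [hT, h2]
        have hT0 : T ≠ 0 := fun h => hc0 (by rw [h, coeff_zero] at hTc; exact hTc.symm)
        have hTnd : T.natDegree = Q.natDegree :=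
          le_antisymm hTd (le_natDegree_of_ne_zero (by rw [hTc]; exact hc0))
        have hTdeg : T.degree = Q.degree := by
          rw [degree_eq_natDegree hT0, degree_eq_natDegree hQ0, hTnd]
        have hTlc : T.leadingCoeff = Q.leadingCoeff := by
          rw [Polynomial.leadingCoeff, hTnd, hTc]
        by_cases hQT : Q - T = 0
        · refine ⟨C c * X ^ e, 0, ?_, ?_⟩
          · rw [add_zero, ← hT, ← sub_eq_zero]
            exact hQT
          · rw [degree_zero]
            exact Ne.bot_lt fun h => hP.ne_zero (degree_eq_bot.mp h)
        · have hlt2 : (Q - T).degree < Q.degree :=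
            degree_sub_lt hTdeg.symm hQ0 hTlc.symm
          have hnd : (Q - T).natDegree < d := by
            have := natDegree_lt_natDegree hQT hlt2
            omega
          obtain ⟨R', S', hQT', hS'⟩ := ih (Q - T) hnd
          refine ⟨C c * X ^ e + R', S', ?_, hS'⟩
          rw [skewMul_add_left, ← hT]
          calc Q = T + (Q - T) := by ring
          _ = T + (skewMul σ R' P + S') := by rw [← hQT']
          _ = T + skewMul σ R' P + S' := by ring
  exact key (Q.natDegree + 1) Q (Nat.lt_succ_self _)

lemma exists_vanishing (σ : K →+* K) :
    ∀ (m : ℕ) (b : Fin m → K), ∃ N : Polynomial K,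
      N.Monic ∧ N.natDegree = m ∧ ∀ j, skewEval σ N (b j) = 0 := by
  classical
  intro m
  induction m with
  | zero => exact fun b => ⟨1, monic_one, natDegree_one, fun j => j.elim0⟩
  | succ m ih =>
    intro b
    obtain ⟨N0, hm, hd, hv⟩ := ih (b ∘ Fin.castSucc)
    set y := b (Fin.last m) with hy
    set c := skewEval σ N0 y with hc
    set bb := if c = 0 then 0 else σ c * y * c⁻¹ with hbb
    refine ⟨skewMul σ (X - C bb) N0, (monic_skewMul (monic_X_sub_C bb) hm).1, ?_, ?_⟩
    · rw [(monic_skewMul (monic_X_sub_C bb) hm).2, natDegree_X_sub_C, hd]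
      omega
    · intro j
      refine Fin.lastCases ?_ (fun k => ?_) j
      · rw [← hy, skewEval_skewMul_linear, ← hc]
        by_cases h0 : c = 0
        · rw [hbb, if_pos h0, h0]
          simp
        · rw [hbb, if_neg h0]
          field_simp
          simp
      · exact skewEval_skewMul_eq_zero _ (hv k)

lemma exists_isMinSkewPoly (σ : K →+* K) (S : Set K) (N : Polynomial K) (hN : N.Monic)
    (hvan : SkewVanishes σ N S) :
    ∃ P : Polynomial K, IsMinSkewPoly σ P S ∧ P.natDegree ≤ N.natDegree := by
  classical
  have hex : ∃ d : ℕ, ∃ P : Polynomial K,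
      P.Monic ∧ SkewVanishes σ P S ∧ P.natDegree = d := ⟨N.natDegree, N, hN, hvan, rfl⟩
  obtain ⟨P, hPm, hPv, hPd⟩ := Nat.find_spec hex
  refine ⟨P, ⟨hPm, hPv, ?_⟩, ?_⟩
  · intro Q hQv
    obtain ⟨R, Srem, hdiv, hSdeg⟩ := skew_div P hPm Q
    have hSv : SkewVanishes σ Srem S := by
      intro x hx
      have h1 : Srem = Q - skewMul σ R P := by rw [hdiv]; ring
      rw [h1, skewEval_sub, hQv x hx, skewEval_skewMul_eq_zero R (hPv x hx), sub_zero]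
    by_cases h0 : Srem = 0
    · exact ⟨R, by rw [hdiv, h0, add_zero]⟩
    · exfalso
      have hlt : Srem.natDegree < P.natDegree := natDegree_lt_natDegree h0 hSdeg
      have hP' : (Srem * C Srem.leadingCoeff⁻¹).Monic := monic_mul_leadingCoeff_inv h0
      have hv' : SkewVanishes σ (Srem * C Srem.leadingCoeff⁻¹) S := by
        intro x hx
        rw [mul_comm, skewEval_C_mul, hSv x hx, mul_zero]
      have hd' : (Srem * C Srem.leadingCoeff⁻¹).natDegree < Nat.find hex := by
        have h2 : (Srem * C Srem.leadingCoeff⁻¹).natDegree ≤ Srem.natDegree :=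
          natDegree_mul_le.trans (by simp [natDegree_C])
        omega
      exact Nat.find_min hex hd' ⟨_, hP', hv', rfl⟩
  · rw [hPd]
    exact Nat.find_le ⟨N, hN, hvan, rfl⟩

end Aux

/-- For a P-independent set `S = {a₁,…,aₙ}` of distinct elements with minimal skew polynomial
`P_S`, the σ-Vandermonde determinant is nonzero and
`P_S(a) = det V^σ(a₁,…,aₙ,a) / det V^σ(a₁,…,aₙ)` for every `a ∈ K`. -/
theorem stmt_3 {K : Type*} [Field K] (σ : K →+* K) {n : ℕ} (a : Fin n → K)
    (hinj : Function.Injective a) (hind : PIndependent σ (Set.range a))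
    (PS : Polynomial K) (hPS : IsMinSkewPoly σ PS (Set.range a)) :
    (skewVandermonde σ a).det ≠ 0 ∧
    ∀ x : K, skewEval σ PS x =
      (skewVandermonde σ (Fin.snoc a x)).det / (skewVandermonde σ a).det := by
  classical
  obtain ⟨Nfull, hNm, hNd, hNv⟩ := exists_vanishing σ n a
  have hNvan : SkewVanishes σ Nfull (Set.range a) := by rintro x ⟨j, rfl⟩; exact hNv j
  -- Step 1 : the determinant is nonzero
  have hdet : (skewVandermonde σ a).det ≠ 0 := by
    clear hNvan hNv hNd hNm hPS
    cases n with
    | zero => simp [Matrix.det_fin_zero]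
    | succ m =>
      intro hdet0
      obtain ⟨v, hv0, hvV⟩ := Matrix.exists_mulVec_eq_zero_iff.mpr hdet0
      obtain ⟨j0, hj0⟩ := Function.ne_iff.mp hv0
      set b : Fin m → K := a ∘ j0.succAbove with hb
      have hrange : Set.range b = Set.range a \ {a j0} := by
        ext x
        constructor
        · rintro ⟨k, rfl⟩
          exact ⟨⟨_, rfl⟩, fun h => Fin.succAbove_ne j0 k (hinj h)⟩
        · rintro ⟨⟨j, rfl⟩, hne⟩
          have hjj : j ≠ j0 := fun h => hne (by rw [h]; exact rfl)
          obtain ⟨k, hk⟩ := Fin.exists_succAbove_eq hjj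
          exact ⟨k, by rw [hb]; simp [hk]⟩
      obtain ⟨Nb, hNbm, hNbd, hNbv⟩ := exists_vanishing σ m b
      obtain ⟨Pj, hPj, hPjd⟩ := exists_isMinSkewPoly σ (Set.range b) Nb hNbm
        (by rintro x ⟨k, rfl⟩; exact hNbv k)
      rw [hrange] at hPj
      have hne0 := hind (a j0) ⟨j0, rfl⟩ Pj hPj
      have hdeg : Pj.natDegree < m + 1 := by omega
      have hvan_j : ∀ j : Fin (m + 1), j ≠ j0 → skewEval σ Pj (a j) = 0 := by
        intro j hj
        obtain ⟨k, hk⟩ := Fin.exists_succAbove_eq hj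
        have hmem : a j ∈ Set.range b := ⟨k, by rw [hb]; simp [hk]⟩
        rw [hrange] at hmem
        exact hPj.2.1 _ hmem
      have hrow : ∀ i : Fin (m + 1), ∑ j, skewN σ (i : ℕ) (a j) * v j = 0 := by
        intro i
        have h1 := congrFun hvV i
        simp only [Matrix.mulVec, dotProduct, skewVandermonde, Matrix.of_apply,
          Pi.zero_apply] at h1
        exact h1
      have key : ∑ j : Fin (m + 1), skewEval σ Pj (a j) * v j = 0 := by
        calc ∑ j : Fin (m + 1), skewEval σ Pj (a j) * v j
            = ∑ j : Fin (m + 1), ∑ i ∈ Finset.range (m + 1),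
                Pj.coeff i * skewN σ i (a j) * v j := by
              refine Finset.sum_congr rfl fun j _ => ?_
              rw [skewEval_eq_sum_range hdeg, Finset.sum_mul]
          _ = ∑ i ∈ Finset.range (m + 1), Pj.coeff i *
                ∑ j : Fin (m + 1), skewN σ i (a j) * v j := by
              rw [Finset.sum_comm]
              exact Finset.sum_congr rfl fun i _ => by
                rw [Finset.mul_sum]
                exact Finset.sum_congr rfl fun j _ => by ring
          _ = 0 := by
              refine Finset.sum_eq_zero fun i hi => ?_
              have him := Finset.mem_range.mp hi
              rw [hrow ⟨i, him⟩, mul_zero]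
      rw [Finset.sum_eq_single j0 (fun j _ hj => by rw [hvan_j j hj, zero_mul])
        (fun h => absurd (Finset.mem_univ j0) h)] at key
      exact mul_ne_zero hne0 hj0 key
  -- Step 2 : PS has degree exactly n
  obtain ⟨R0, hR0⟩ := hPS.2.2 Nfull hNvan
  have hR0ne : R0 ≠ 0 := by
    rintro rfl
    rw [skewMul_zero_left] at hR0
    exact hNm.ne_zero hR0
  have hcoef : Nfull.coeff (R0.natDegree + PS.natDegree) ≠ 0 := by
    rw [hR0, coeff_skewMul_top, hPS.1.leadingCoeff, iterate_map_one, mul_one]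
    exact leadingCoeff_ne_zero.mpr hR0ne
  have hle : PS.natDegree ≤ n := by
    have h1 := le_natDegree_of_ne_zero hcoef
    omega
  have hge : n ≤ PS.natDegree := by
    by_contra hlt
    push_neg at hlt
    set u : Fin n → K := fun i => PS.coeff i with hu
    have hu0 : u ≠ 0 := by
      intro h
      have h1 : u ⟨PS.natDegree, hlt⟩ = 0 := by rw [h]; rfl
      rw [hu] at h1
      simp only at h1
      rw [hPS.1.coeff_natDegree] at h1
      exact one_ne_zero h1
    have hker : ((skewVandermonde σ a).transpose).mulVec u = 0 := by
      funext j
      simp only [Matrix.mulVec, dotProduct, Matrix.transpose_apply, skewVandermonde,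
        Matrix.of_apply, Pi.zero_apply]
      have hv := hPS.2.1 (a j) ⟨j, rfl⟩
      rw [skewEval_eq_sum_range hlt,
        ← Fin.sum_univ_eq_sum_range (fun i => PS.coeff i * skewN σ i (a j)) n] at hv
      rw [← hv]
      exact Finset.sum_congr rfl fun i _ => mul_comm _ _
    have hdt : ((skewVandermonde σ a).transpose).det = 0 :=
      Matrix.exists_mulVec_eq_zero_iff.mp ⟨u, hu0, hker⟩
    rw [Matrix.det_transpose] at hdt
    exact hdet hdt
  have hdPS : PS.natDegree = n := le_antisymm hle hge
  -- Step 3 : the determinant formula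
  refine ⟨hdet, fun x => ?_⟩
  set Mm : Fin (n + 1) → K := fun i =>
    ((skewVandermonde σ (Fin.snoc a (0 : K))).submatrix i.succAbove
      (Fin.last n).succAbove).det with hM
  set Qp : Polynomial K :=
    ∑ i : Fin (n + 1), C ((-1) ^ ((i : ℕ) + n) * Mm i) * X ^ (i : ℕ) with hQp
  have heval : ∀ y : K, skewEval σ Qp y = (skewVandermonde σ (Fin.snoc a y)).det := by
    intro y
    rw [hQp, skewEval_finset_sum, Matrix.det_succ_column (skewVandermonde σ (Fin.snoc a y))
      (Fin.last n)]
    refine Finset.sum_congr rfl fun i _ => ?_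
    rw [C_mul_X_pow_eq_monomial, skewEval_monomial]
    have h1 : skewVandermonde σ (Fin.snoc a y) i (Fin.last n) = skewN σ (i : ℕ) y := by
      simp [skewVandermonde]
    have h2 : (skewVandermonde σ (Fin.snoc a y)).submatrix i.succAbove
        (Fin.last n).succAbove = (skewVandermonde σ (Fin.snoc a (0 : K))).submatrix
          i.succAbove (Fin.last n).succAbove := by
      ext r s
      simp [skewVandermonde, Matrix.submatrix, Fin.succAbove_last]
    rw [h1, h2, Fin.val_last]
    show (-1 : K) ^ ((i : ℕ) + n) * Mm i * skewN σ (i : ℕ) y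
      = (-1) ^ ((i : ℕ) + n) * skewN σ (i : ℕ) y * Mm i
    ring
  have hQpcoeff : ∀ k : Fin (n + 1), Qp.coeff (k : ℕ) = (-1) ^ ((k : ℕ) + n) * Mm k := by
    intro k
    rw [hQp, finset_sum_coeff,
      Finset.sum_eq_single k (fun i _ hik => ?_) (fun h => absurd (Finset.mem_univ k) h)]
    · rw [coeff_C_mul, coeff_X_pow, if_pos rfl, mul_one]
    · rw [coeff_C_mul, coeff_X_pow, if_neg (fun h => hik (Fin.val_injective h.symm)), mul_zero]
  have hMlast : Mm (Fin.last n) = (skewVandermonde σ a).det := by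
    have hsub : (skewVandermonde σ (Fin.snoc a (0 : K))).submatrix (Fin.last n).succAbove
        (Fin.last n).succAbove = skewVandermonde σ a := by
      ext r s
      simp [skewVandermonde, Matrix.submatrix, Fin.succAbove_last]
    show ((skewVandermonde σ (Fin.snoc a (0 : K))).submatrix (Fin.last n).succAbove
        (Fin.last n).succAbove).det = _
    rw [hsub]
  have hQptop : Qp.coeff n = (skewVandermonde σ a).det := by
    have h1 := hQpcoeff (Fin.last n)
    rw [Fin.val_last] at h1
    have h2 : ((-1 : K)) ^ (n + n) = 1 := by
      rw [← two_mul, pow_mul]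
      norm_num
    rw [h1, hMlast, h2, one_mul]
  have hQpd : Qp.natDegree ≤ n := by
    rw [hQp]
    refine natDegree_sum_le_of_forall_le _ _ fun i _ => ?_
    refine natDegree_mul_le.trans ?_
    have h1 : (i : ℕ) ≤ n := Fin.is_le i
    rw [natDegree_X_pow]
    simp only [natDegree_C, zero_add]
    exact h1
  have hQvan : SkewVanishes σ Qp (Set.range a) := by
    rintro x ⟨j, rfl⟩
    rw [heval]
    refine Matrix.det_zero_of_column_eq (i := Fin.castSucc j) (j := Fin.last n)
      (Fin.castSucc_lt_last j).ne fun k => ?_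
    simp [skewVandermonde]
  obtain ⟨R, hR⟩ := hPS.2.2 Qp hQvan
  have hQp0 : Qp ≠ 0 := fun h => hdet (by rw [← hQptop, h, coeff_zero])
  have hRne : R ≠ 0 := by
    rintro rfl
    rw [skewMul_zero_left] at hR
    exact hQp0 hR
  have hRd : R.natDegree = 0 := by
    have h1 : Qp.coeff (R.natDegree + PS.natDegree) ≠ 0 := by
      rw [hR, coeff_skewMul_top, hPS.1.leadingCoeff, iterate_map_one, mul_one]
      exact leadingCoeff_ne_zero.mpr hRne
    have h2 := le_natDegree_of_ne_zero h1
    omega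
  have hr : R.coeff 0 = (skewVandermonde σ a).det := by
    have h2 := coeff_skewMul_top (σ := σ) R PS
    rw [hPS.1.leadingCoeff, iterate_map_one, mul_one, hRd, hdPS, zero_add] at h2
    rw [← hQptop, hR, h2, Polynomial.leadingCoeff, hRd]
  have hfinal : (skewVandermonde σ (Fin.snoc a x)).det
      = (skewVandermonde σ a).det * skewEval σ PS x := by
    rw [← heval, hR, eq_C_of_natDegree_eq_zero hRd, ← monomial_zero_left,
      skewEval_skewMul_monomial, hr]
    simp [skewN_zero]
  rw [hfinal, mul_comm, mul_div_assoc, div_self hdet, mul_one]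
end

section
/- Let (K, σ) be a σ-field and let S = {a_1, …, a_n} ⊆ K be a P-independent set of n distinct elements with minimal polynomial P_S(T) = Σ_{i=0}^n b_i T^i ∈ K[T;σ] (so b_n = 1). Then for each 0 ≤ i ≤ n, b_i = ((−1)^{n+i} / det(V^σ(a_1,…,a_n))) · det(M_i), where M_i is the n×n matrix obtained from the (n+1)×n matrix (N_j(a_k))_{0 ≤ j ≤ n, 1 ≤ k ≤ n} by deleting the row of index i. Moreover, the constant term satisfies b_0 = (−1)^n · (σ(det(V^σ(a_1,…,a_n))) / det(V^σ(a_1,…,a_n))) · a_1 a_2 ⋯ a_n. -/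
open Polynomial

variable {K : Type*} [Field K]

/-- If `S = range a` admits a minimal skew polynomial of degree `n`, the σ-Vandermonde
determinant is nonzero. -/
lemma skewVandermonde_det_ne_zero (σ : K →+* K) {n : ℕ} (a : Fin n → K)
    (PS : Polynomial K) (hPS : IsMinSkewPoly σ PS (Set.range a))
    (hdeg : PS.natDegree = n) : (skewVandermonde σ a).det ≠ 0 := by
  have hb : PS.coeff n = 1 := by
    have h := hPS.1
    rwa [Polynomial.Monic, Polynomial.leadingCoeff, hdeg] at h
  intro h0
  obtain ⟨c, hc, hmc⟩ := Matrix.exists_vecMul_eq_zero_iff.mpr h0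
  set Q : Polynomial K := ∑ i : Fin n, Polynomial.C (c i) * Polynomial.X ^ (i : ℕ) with hQ
  have hcoeff : ∀ m : ℕ, Q.coeff m = ∑ i : Fin n, c i * (if m = (i : ℕ) then 1 else 0) := by
    intro m
    rw [hQ, Polynomial.finset_sum_coeff]
    refine Finset.sum_congr rfl fun i _ => ?_
    rw [Polynomial.coeff_C_mul, Polynomial.coeff_X_pow]
  have hcoeff_lt : ∀ i : Fin n, Q.coeff (i : ℕ) = c i := by
    intro i
    rw [hcoeff, Finset.sum_eq_single i]
    · simp
    · intro b _ hb'
      simp [Fin.val_eq_val, (Ne.symm hb')]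
    · simp
  have hcoeff_ge : ∀ m : ℕ, n ≤ m → Q.coeff m = 0 := by
    intro m hm
    rw [hcoeff]
    refine Finset.sum_eq_zero fun i _ => ?_
    have hi := i.isLt
    have : m ≠ (i : ℕ) := by omega
    simp [this]
  have hQsupp : Q.support ⊆ Finset.range n := by
    intro m hm
    rw [Polynomial.mem_support_iff] at hm
    rw [Finset.mem_range]
    by_contra h
    exact hm (hcoeff_ge m (le_of_not_gt h))
  have hvan : SkewVanishes σ Q (Set.range a) := by
    rintro x ⟨k, rfl⟩
    unfold skewEval
    rw [Finset.sum_subset hQsupp (fun x _ hx => by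
      rw [Polynomial.notMem_support_iff.mp hx, zero_mul])]
    rw [← Fin.sum_univ_eq_sum_range (fun m => Q.coeff m * skewN σ m (a k)) n]
    have := congrFun hmc k
    rw [Matrix.vecMul, dotProduct] at this
    simp only [Pi.zero_apply] at this
    rw [← this]
    refine Finset.sum_congr rfl fun i _ => ?_
    rw [hcoeff_lt i]
    rfl
  obtain ⟨R, hR⟩ := hPS.2.2 Q hvan
  by_cases hR0 : R = 0
  · rw [hR0] at hR
    have hQ0 : Q = 0 := by
      rw [hR]
      simp [skewMul]
    obtain ⟨i0, hi0⟩ := Function.ne_iff.mp hc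
    simp only [Pi.zero_apply] at hi0
    apply hi0
    rw [← hcoeff_lt i0, hQ0, Polynomial.coeff_zero]
  · have hlead : (skewMul σ R PS).coeff (R.natDegree + n) = R.leadingCoeff := by
      rw [skewMul, Polynomial.finset_sum_coeff]
      simp_rw [Polynomial.finset_sum_coeff, Polynomial.coeff_C_mul, Polynomial.coeff_X_pow]
      rw [Finset.sum_eq_single R.natDegree]
      · rw [Finset.sum_eq_single n]
        · rw [hb, if_pos rfl, iterate_map_one, mul_one, mul_one, Polynomial.leadingCoeff]
        · intro j hj hjn
          have hj' : j ≤ n := hdeg ▸ Polynomial.le_natDegree_of_mem_supp j hj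
          have : R.natDegree + n ≠ R.natDegree + j := by omega
          simp [this, hjn.symm]
        · intro hn
          exact absurd (Polynomial.mem_support_iff.mpr (by rw [hb]; exact one_ne_zero)) hn
      · intro i hi hid
        refine Finset.sum_eq_zero fun j hj => ?_
        have hi' : i ≤ R.natDegree := Polynomial.le_natDegree_of_mem_supp i hi
        have hj' : j ≤ n := hdeg ▸ Polynomial.le_natDegree_of_mem_supp j hj
        have : R.natDegree + n ≠ i + j := by omega
        simp [this]
      · intro hd
        exact absurd (Polynomial.natDegree_mem_support_of_nonzero hR0) hd
    have h1 : Q.coeff (R.natDegree + n) = 0 := hcoeff_ge _ (Nat.le_add_left n R.natDegree)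
    rw [hR, hlead] at h1
    exact Polynomial.leadingCoeff_ne_zero.mpr hR0 h1


/-- Vieta-type formulas: the coefficients `bᵢ` of the minimal skew polynomial
`P_S = Σ bᵢ Tⁱ` (monic of degree `n`) of a P-independent set `S = {a₁,…,aₙ}` of distinct
elements are given by `bᵢ = (−1)^{n+i}·det(Mᵢ)/det V^σ(a₁,…,aₙ)`, where `Mᵢ` deletes the
row of index `i` from the `(n+1)×n` matrix `(N_j(a_k))`; moreover
`b₀ = (−1)ⁿ·(σ(det V)/det V)·a₁⋯aₙ`. -/
theorem stmt_4 {K : Type*} [Field K] (σ : K →+* K) {n : ℕ} (a : Fin n → K)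
    (hinj : Function.Injective a) (hind : PIndependent σ (Set.range a))
    (PS : Polynomial K) (hPS : IsMinSkewPoly σ PS (Set.range a))
    (hdeg : PS.natDegree = n) :
    (∀ i : Fin (n + 1), PS.coeff (i : ℕ) =
      (-1 : K) ^ (n + (i : ℕ)) / (skewVandermonde σ a).det *
        (Matrix.of fun (j k : Fin n) => skewN σ ((i.succAbove j : Fin (n + 1)) : ℕ) (a k)).det) ∧
    PS.coeff 0 = (-1 : K) ^ n *
      (σ ((skewVandermonde σ a).det) / (skewVandermonde σ a).det) * ∏ i, a i := by
  have hdet := skewVandermonde_det_ne_zero σ a PS hPS hdeg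
  have hb : PS.coeff n = 1 := by
    have h := hPS.1
    rwa [Polynomial.Monic, Polynomial.leadingCoeff, hdeg] at h
  have hsupp : PS.support ⊆ Finset.range (n + 1) := by
    rw [← hdeg]; exact PS.supp_subset_range_natDegree_succ
  have hsum : ∀ k : Fin n, ∑ j : Fin (n + 1), PS.coeff (j : ℕ) * skewN σ (j : ℕ) (a k) = 0 := by
    intro k
    have h0 : skewEval σ PS (a k) = 0 := hPS.2.1 (a k) ⟨k, rfl⟩
    unfold skewEval at h0
    rw [Fin.sum_univ_eq_sum_range (fun j => PS.coeff j * skewN σ j (a k)) (n + 1)]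
    rw [← Finset.sum_subset hsupp (fun x _ hx => by
      rw [Polynomial.notMem_support_iff.mp hx, zero_mul])]
    exact h0
  have key : ∀ i : Fin (n + 1), PS.coeff (i : ℕ) * (skewVandermonde σ a).det =
      (-1 : K) ^ ((i : ℕ) + n) *
        (Matrix.of fun (j k : Fin n) => skewN σ ((i.succAbove j : Fin (n + 1)) : ℕ) (a k)).det := by
    intro i
    set B : Matrix (Fin (n + 1)) (Fin (n + 1)) K :=
      Matrix.of fun j k =>
        (Fin.snoc (fun k' : Fin n => skewN σ (j : ℕ) (a k'))
          (if j = i then (1 : K) else 0) : Fin (n + 1) → K) k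
      with hB
    have hBcs : ∀ (j : Fin (n + 1)) (k : Fin n),
        B j (Fin.castSucc k) = skewN σ (j : ℕ) (a k) := by
      intro j k; simp [hB]
    have hBl : ∀ j : Fin (n + 1), B j (Fin.last n) = if j = i then 1 else 0 := by
      intro j; simp [hB]
    have hsub : ∀ r : Fin (n + 1), B.submatrix r.succAbove (Fin.last n).succAbove =
        Matrix.of fun (j k : Fin n) => skewN σ ((r.succAbove j : Fin (n + 1)) : ℕ) (a k) := by
      intro r
      ext j k
      rw [Matrix.submatrix_apply, Fin.succAbove_last, hBcs]
      rfl
    have e1 : B.det = (-1 : K) ^ ((i : ℕ) + n) *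
        (Matrix.of fun (j k : Fin n) => skewN σ ((i.succAbove j : Fin (n + 1)) : ℕ) (a k)).det := by
      rw [Matrix.det_succ_column B (Fin.last n), Finset.sum_eq_single i]
      · rw [hBl, if_pos rfl, mul_one, Fin.val_last, hsub]
      · intro b _ hb'
        rw [hBl, if_neg hb', mul_zero, zero_mul]
      · simp
    set D := B.updateRow (Fin.last n) (∑ j : Fin (n + 1), PS.coeff (j : ℕ) • B j) with hD
    have e2 : D.det = B.det := by
      rw [hD, Matrix.det_updateRow_sum B (Fin.last n) (fun j => PS.coeff (j : ℕ)),
        Fin.val_last, hb, one_smul]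
    have hDl : ∀ k, D (Fin.last n) k = ∑ j : Fin (n + 1), PS.coeff (j : ℕ) * B j k := by
      intro k
      rw [hD, Matrix.updateRow_self]
      simp [Finset.sum_apply]
    have hDr : ∀ (j : Fin n) (k : Fin (n + 1)), D (Fin.castSucc j) k = B (Fin.castSucc j) k := by
      intro j k
      rw [hD, Matrix.updateRow_ne (Fin.castSucc_lt_last j).ne]
    have e3 : D.det = PS.coeff (i : ℕ) * (skewVandermonde σ a).det := by
      rw [Matrix.det_succ_row D (Fin.last n), Finset.sum_eq_single (Fin.last n)]
      · rw [hDl]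
        have h1 : (∑ j : Fin (n + 1), PS.coeff (j : ℕ) * B j (Fin.last n)) = PS.coeff (i : ℕ) := by
          rw [Finset.sum_congr rfl fun j _ => by rw [hBl]]
          simp
        have h2 : D.submatrix (Fin.last n).succAbove (Fin.last n).succAbove =
            skewVandermonde σ a := by
          ext j k
          rw [Matrix.submatrix_apply, Fin.succAbove_last, hDr, hBcs]
          rfl
        rw [h1, h2, Fin.val_last]

        have : Even (n + n) := ⟨n, by ring⟩
        rw [this.neg_one_pow, one_mul]
      · intro k _ hk
        obtain ⟨k', rfl⟩ := Fin.exists_castSucc_eq.mpr hk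
        rw [hDl]
        have : (∑ j : Fin (n + 1), PS.coeff (j : ℕ) * B j (Fin.castSucc k')) = 0 := by
          rw [Finset.sum_congr rfl fun j _ => by rw [hBcs]]
          exact hsum k'
        rw [this, mul_zero, zero_mul]
      · simp
    rw [← e3, e2, e1]
  constructor
  · intro i
    rw [div_mul_eq_mul_div, eq_div_iff hdet, add_comm n (i : ℕ)]
    exact key i
  · have k0 := key 0
    simp only [Fin.val_zero] at k0
    have hM0 : (Matrix.of fun (j k : Fin n) =>
        skewN σ (((0 : Fin (n + 1)).succAbove j : Fin (n + 1)) : ℕ) (a k)).det =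
        σ ((skewVandermonde σ a).det) * ∏ i, a i := by
      have hEq : (Matrix.of fun (j k : Fin n) =>
          skewN σ (((0 : Fin (n + 1)).succAbove j : Fin (n + 1)) : ℕ) (a k)) =
          ((skewVandermonde σ a).map σ) * Matrix.diagonal a := by
        ext j k
        rw [Matrix.mul_diagonal, Matrix.map_apply, Matrix.of_apply, Fin.succAbove_zero]
        show skewN σ ((j : ℕ) + 1) (a k) = σ (skewVandermonde σ a j k) * a k
        rfl
      rw [hEq, Matrix.det_mul, Matrix.det_diagonal, ← RingHom.mapMatrix_apply, ← RingHom.map_det]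
    rw [hM0] at k0
    have : PS.coeff 0 = ((-1 : K) ^ (0 + n) * (σ ((skewVandermonde σ a).det) * ∏ i, a i)) /
        (skewVandermonde σ a).det := by
      rw [eq_div_iff hdet]
      exact k0
    rw [this, zero_add]
    ring
end

section
/- Let (L, σ) be a σ-extension of a σ-field (K, σ). If a, b ∈ L are σ-algebraic over K, then σ(a) and a·b are σ-algebraic over K. -/
open Polynomial

open Pointwise

variable {K : Type*} [Field K]

/-- In a σ-extension `(L, σL)` of the σ-subfield `K`, the element `a` is σ-algebraic
over `K`: it is a right root of some nonzero skew polynomial with coefficients in `K`. -/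
def IsSkewAlgebraic {L : Type*} [Field L] (σL : L →+* L) (K : Subfield L) (a : L) : Prop :=
  ∃ P : Polynomial L, P ≠ 0 ∧ (∀ i, P.coeff i ∈ K) ∧ skewEval σL P a = 0

lemma skewN_sigma (σ : K →+* K) (a : K) : ∀ i, skewN σ i (σ a) = σ (skewN σ i a)
  | 0 => by simp [skewN]
  | i + 1 => by rw [skewN, skewN, skewN_sigma σ a i, map_mul]

lemma skewN_mul (σ : K →+* K) (a b : K) :
    ∀ i, skewN σ i (a * b) = skewN σ i a * skewN σ i b
  | 0 => by simp [skewN]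
  | i + 1 => by rw [skewN, skewN, skewN, skewN_mul σ a b i, map_mul]; ring

/-- The degree of a witness polynomial is at least 1. -/
lemma skew_natDegree_pos {L : Type*} [Field L] (σL : L →+* L) {a : L} {P : Polynomial L}
    (hP0 : P ≠ 0) (hPe : skewEval σL P a = 0) : 0 < P.natDegree := by
  rcases Nat.eq_zero_or_pos P.natDegree with h | h
  · exfalso
    obtain ⟨c, rfl⟩ : ∃ c, P = C c := ⟨P.coeff 0, Polynomial.eq_C_of_natDegree_eq_zero h⟩
    have hc : c ≠ 0 := fun hc => hP0 (by simp [hc])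
    rw [skewEval, Polynomial.support_C hc] at hPe
    simp [skewN] at hPe
    exact hc hPe
  · exact h

/-- The key finiteness lemma: if `a` is σ-algebraic over `K`, all of the `skewN σL i a`
lie in the span of a finite set. -/
lemma skew_span_finite {L : Type*} [Field L] (σL : L →+* L) (K : Subfield L)
    (hK : ∀ x ∈ K, σL x ∈ K) {a : L} (ha : IsSkewAlgebraic σL K a) :
    ∃ s : Set L, s.Finite ∧ ∀ i, skewN σL i a ∈ Submodule.span K s := by
  obtain ⟨P, hP0, hPK, hPe⟩ := ha
  set n := P.natDegree with hn
  have hnpos : 0 < n := skew_natDegree_pos σL hP0 hPe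
  set s : Set L := (fun j => skewN σL j a) '' (Set.Iio n) with hs
  refine ⟨s, (Set.finite_Iio n).image _, ?_⟩
  set W := Submodule.span (K : Subfield L) s with hW
  have hgen : ∀ j < n, skewN σL j a ∈ W :=
    fun j hj => Submodule.subset_span ⟨j, hj, rfl⟩
  -- `skewN σL n a ∈ W` from the relation `P(a) = 0`
  have hsum : ∑ i ∈ Finset.range (n + 1), P.coeff i * skewN σL i a = 0 := by
    rw [← hPe, skewEval]
    refine (Finset.sum_subset (Polynomial.supp_subset_range_natDegree_succ) ?_).symm
    intro x _ hx
    rw [Polynomial.notMem_support_iff.mp hx, zero_mul]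
  have hlead : P.coeff n ≠ 0 := by
    rw [hn]; exact Polynomial.leadingCoeff_ne_zero.mpr hP0
  have htop : skewN σL n a ∈ W := by
    have h1 : ∑ i ∈ Finset.range n, P.coeff i * skewN σL i a
        = -(P.coeff n * skewN σL n a) := by
      rw [Finset.sum_range_succ] at hsum
      exact eq_neg_of_add_eq_zero_left hsum
    have h2 : ∑ i ∈ Finset.range n, (-(P.coeff i / P.coeff n)) * skewN σL i a
        = skewN σL n a := by
      calc ∑ i ∈ Finset.range n, (-(P.coeff i / P.coeff n)) * skewN σL i a
          = (-(P.coeff n)⁻¹) * ∑ i ∈ Finset.range n, P.coeff i * skewN σL i a := by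
            rw [Finset.mul_sum]
            exact Finset.sum_congr rfl fun i _ => by rw [div_eq_mul_inv]; ring
        _ = (-(P.coeff n)⁻¹) * (-(P.coeff n * skewN σL n a)) := by rw [h1]
        _ = skewN σL n a := by field_simp
    rw [← h2]
    refine Submodule.sum_mem _ fun i hi => ?_
    have hci : (-(P.coeff i / P.coeff n)) ∈ K :=
      K.neg_mem (K.div_mem (hPK i) (hPK n))
    exact Submodule.smul_mem W (⟨_, hci⟩ : K) (hgen i (Finset.mem_range.mp hi))
  -- W is stable under `x ↦ σL x * a`
  have hstable : ∀ x ∈ W, σL x * a ∈ W := by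
    intro x hx
    induction hx using Submodule.span_induction with
    | mem z hz =>
      obtain ⟨j, hj, rfl⟩ := hz
      have : σL (skewN σL j a) * a = skewN σL (j + 1) a := rfl
      rw [this]
      rcases Nat.lt_or_ge (j + 1) n with h | h
      · exact hgen _ h
      · have : j + 1 = n := le_antisymm (Set.mem_Iio.mp hj) h
        rw [this]; exact htop
    | zero => simpa using W.zero_mem
    | add y z _ _ hy hz => rw [map_add, add_mul]; exact W.add_mem hy hz
    | smul c y _ hy =>
      have : σL (c • y) * a = (⟨σL c, hK _ c.2⟩ : K) • (σL y * a) := by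
        show σL ((c : L) * y) * a = σL (c : L) * (σL y * a)
        rw [map_mul]; ring
      rw [this]
      exact Submodule.smul_mem W _ hy
  -- all skewN lie in W
  intro i
  induction i with
  | zero => exact hgen 0 hnpos
  | succ i ih => exact hstable _ ih

/-- If `a` and `b` are σ-algebraic over `K`, then so are `σ(a)` and `a·b`. -/
theorem stmt_7 {L : Type*} [Field L] (σL : L →+* L) (K : Subfield L)
    (hK : ∀ x ∈ K, σL x ∈ K) (a b : L)
    (ha : IsSkewAlgebraic σL K a) (hb : IsSkewAlgebraic σL K b) :
    IsSkewAlgebraic σL K (σL a) ∧ IsSkewAlgebraic σL K (a * b) := by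
  constructor
  · -- σ(a) is σ-algebraic: map the witness polynomial by σL
    obtain ⟨P, hP0, hPK, hPe⟩ := ha
    have hinj : Function.Injective σL := σL.injective
    refine ⟨P.map σL, ?_, ?_, ?_⟩
    · exact (Polynomial.map_ne_zero_iff hinj).mpr hP0
    · intro i; rw [Polynomial.coeff_map]; exact hK _ (hPK i)
    · rw [skewEval, Polynomial.support_map_of_injective P hinj]
      have : ∀ i ∈ P.support,
          (P.map σL).coeff i * skewN σL i (σL a) = σL (P.coeff i * skewN σL i a) := by
        intro i _
        rw [Polynomial.coeff_map, skewN_sigma, map_mul]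
      rw [Finset.sum_congr rfl this, ← map_sum, ← skewEval, hPe, map_zero]
  · -- a·b is σ-algebraic: linear dependence of skewN in a finite-dimensional span
    obtain ⟨sa, hsa, hma⟩ := skew_span_finite σL K hK ha
    obtain ⟨sb, hsb, hmb⟩ := skew_span_finite σL K hK hb
    classical
    set u : Set L := sa * sb with hu
    have hufin : u.Finite := hsa.mul hsb
    haveI : Fintype u := hufin.fintype
    set U := Submodule.span (K : Subfield L) u with hU
    have hmem : ∀ i, skewN σL i (a * b) ∈ U := by
      intro i
      rw [skewN_mul, hU, hu, ← Submodule.span_mul_span]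
      exact Submodule.mul_mem_mul (hma i) (hmb i)
    set d : ℕ := u.toFinset.card with hd
    haveI : FiniteDimensional (K : Subfield L) U := FiniteDimensional.span_of_finite _ hufin
    have hfr : Module.finrank (K : Subfield L) U ≤ d := finrank_span_le_card u
    -- the d+1 vectors skewN σL i (a*b), i ≤ d, are linearly dependent
    set w : Fin (d + 1) → U := fun i => ⟨skewN σL i (a * b), hmem i⟩ with hw
    have hnli : ¬ LinearIndependent (K : Subfield L) w := by
      intro hli
      have := hli.fintype_card_le_finrank
      simp only [Fintype.card_fin] at this
      omega
    obtain ⟨g, hg0, i₀, hgi₀⟩ := Fintype.not_linearIndependent_iff.mp hnli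
    -- the corresponding relation in L
    have hrel : ∑ i : Fin (d + 1), (g i : L) * skewN σL (i : ℕ) (a * b) = 0 := by
      have h := congrArg U.subtype hg0
      rw [map_zero, map_sum] at h
      simp only [map_smul] at h
      exact h
    -- build the polynomial
    set g' : ℕ → L := fun k => if h : k < d + 1 then (g ⟨k, h⟩ : L) else 0 with hg'
    set P : Polynomial L := ∑ k ∈ Finset.range (d + 1), C (g' k) * X ^ k with hP
    have hcoeff : ∀ m, P.coeff m = g' m := by
      intro m
      have hterm : ∀ k, (C (g' k) * X ^ k).coeff m = if m = k then g' k else 0 := by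
        intro k
        simp [Polynomial.coeff_C_mul, Polynomial.coeff_X_pow, mul_ite]
      rw [hP, Polynomial.finset_sum_coeff, Finset.sum_congr rfl fun k _ => hterm k,
        Finset.sum_ite_eq (Finset.range (d + 1)) m g']
      rcases Nat.lt_or_ge m (d + 1) with h | h
      · rw [if_pos (Finset.mem_range.mpr h)]
      · rw [if_neg (by simpa using Nat.not_lt.mpr h)]
        have h0 : g' m = 0 := by simp [hg', Nat.not_lt.mpr h, show ¬ m ≤ d by omega]
        rw [h0]
    refine ⟨P, ?_, ?_, ?_⟩
    · intro h0
      apply hgi₀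
      have := hcoeff i₀
      rw [h0] at this
      simp only [Polynomial.coeff_zero] at this
      have : (g i₀ : L) = 0 := by
        rw [hg'] at this
        simpa [i₀.isLt] using this.symm
      exact_mod_cast Subtype.ext this
    · intro i
      rw [hcoeff]
      by_cases h : i < d + 1
      · simpa [hg', h, show i ≤ d by omega] using SetLike.coe_mem (g ⟨i, h⟩)
      · simpa [hg', h, show ¬ i ≤ d by omega] using K.zero_mem
    · rw [skewEval]
      have hsupp : P.support ⊆ Finset.range (d + 1) := by
        intro m hm
        by_contra h
        have : g' m = 0 := by
          simp only [Finset.mem_range, not_lt] at h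
          simp [hg', Nat.not_lt.mpr h, show ¬ m ≤ d by omega]
        exact Polynomial.mem_support_iff.mp hm (by rw [hcoeff]; exact this)
      rw [Finset.sum_subset hsupp (fun x _ hx => by
        rw [Polynomial.notMem_support_iff.mp hx, zero_mul])]
      have : ∑ m ∈ Finset.range (d + 1), P.coeff m * skewN σL m (a * b)
          = ∑ i : Fin (d + 1), (g i : L) * skewN σL (i : ℕ) (a * b) := by
        rw [Finset.sum_range fun m => P.coeff m * skewN σL m (a * b)]
        refine Finset.sum_congr rfl fun i _ => ?_
        rw [hcoeff]
        simp [hg', i.isLt, show ¬ d < (i : ℕ) from by have := i.isLt; omega]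
      rw [this, hrel]
end
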